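/- arXiv:1408.6443 — 9 statements merged into one kernel-verified Lean document; each statement's English description precedes it below -/
import Mathlib

section
/- For any vector x ∈ ℂⁿ with ‖x‖ = 1 and any n×n diagonal matrix D with positive real diagonal entries, there exists a step-vector y ∈ ℂⁿ such that ‖x − Dy‖ ≤ 1/3, ‖Dy‖ ≤ 1, and every nonzero entry of y is of the form (4/5)^j · e^{(ℓ/29)·2πi} for some integer j and some integer ℓ with 0 ≤ ℓ ≤ 28. -/
open scoped BigOperators

namespace Stmt1

notation "cabs" => (norm : ℂ → ℝ)

/-- The Euclidean norm of a complex vector. -/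
noncomputable def enormC {N : ℕ} (v : Fin N → ℂ) : ℝ :=
  Real.sqrt (∑ i, ‖v i‖ ^ 2)


lemma abs_exp_mul_I_sub_one (t : ℝ) :
    cabs (Complex.exp (t * Complex.I) - 1) ≤ |t| := by
  have h : Complex.exp ((t : ℂ) * Complex.I) - 1
      = ((Real.cos t - 1 : ℝ) : ℂ) + ((Real.sin t : ℝ) : ℂ) * Complex.I := by
    rw [Complex.exp_mul_I, ← Complex.ofReal_cos, ← Complex.ofReal_sin]
    push_cast; ring
  rw [h, Complex.norm_add_mul_I]
  have h2 : (Real.cos t - 1) ^ 2 + Real.sin t ^ 2 = (2 * Real.sin (t / 2)) ^ 2 := by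
    have h3 := Real.cos_two_mul (t / 2)
    rw [show 2 * (t / 2) = t by ring] at h3
    have h4 := Real.sin_sq_add_cos_sq (t / 2)
    have h5 := Real.sin_sq_add_cos_sq t
    nlinarith
  rw [h2, Real.sqrt_sq_eq_abs]
  have := Real.abs_sin_le_abs (x := t / 2)
  rw [abs_mul]
  rw [abs_div] at this
  simp only [abs_two] at *
  nlinarith [abs_nonneg t]

lemma key (d : ℝ) (hd : 0 < d) (z : ℂ) (hz : z ≠ 0) :
    ∃ (j : ℤ) (l : ℕ), l ≤ 28 ∧
      cabs (z - (d : ℂ) * ((4 / 5 : ℂ) ^ j *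
        Complex.exp ((l : ℂ) / 29 * (2 * (Real.pi : ℂ) * Complex.I)))) ≤
        (1 / 3) * cabs z ∧
      cabs ((d : ℂ) * ((4 / 5 : ℂ) ^ j *
        Complex.exp ((l : ℂ) / 29 * (2 * (Real.pi : ℂ) * Complex.I)))) ≤ cabs z := by
  set r : ℝ := cabs z with hr
  have hr0 : 0 < r := norm_pos_iff.mpr hz
  have hpi : (0:ℝ) < Real.pi := Real.pi_pos
  obtain ⟨n, hn1, hn2⟩ := exists_mem_Ico_zpow (x := r / d) (y := (5/4 : ℝ))
    (by positivity) (by norm_num)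
  set j : ℤ := -n with hj
  set s : ℝ := (4/5 : ℝ) ^ j * d with hs
  have h45 : ((4:ℝ)/5) ^ j = ((5:ℝ)/4) ^ n := by
    rw [hj, zpow_neg, ← inv_zpow]; norm_num
  have hs0 : 0 < s := by
    rw [hs]; positivity
  have hsr : s ≤ r := by
    rw [hs, h45]
    have := (le_div_iff₀ hd).mp hn1
    linarith
  have hrs : r ≤ 5/4 * s := by
    rw [hs, h45]
    have h1 := (div_lt_iff₀ hd).mp hn2
    rw [zpow_add_one₀ (by norm_num : (5/4:ℝ) ≠ 0)] at h1
    nlinarith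
  set θ : ℝ := Complex.arg z with hθ
  set θ' : ℝ := if θ < 0 then θ + 2*Real.pi else θ with hθ'
  have harg1 := Complex.neg_pi_lt_arg z
  have harg2 := Complex.arg_le_pi z
  have hθ'0 : 0 ≤ θ' := by
    rw [hθ']; split <;> [linarith; linarith]
  have hθ'2 : θ' < 2*Real.pi := by
    rw [hθ']; split <;> [linarith; linarith]
  have hexp : Complex.exp ((θ' : ℂ) * Complex.I) = Complex.exp ((θ : ℂ) * Complex.I) := by
    rw [hθ']; split
    · push_cast
      rw [add_mul, Complex.exp_add]
      norm_num [Complex.exp_two_pi_mul_I]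
    · rfl
  set m : ℤ := round (29 * θ' / (2*Real.pi)) with hm
  have habs : |29 * θ' / (2*Real.pi) - m| ≤ 1/2 := abs_sub_round _
  rw [abs_le] at habs
  have hx0 : 0 ≤ 29 * θ' / (2*Real.pi) := by positivity
  have hx29 : 29 * θ' / (2*Real.pi) < 29 := by
    rw [div_lt_iff₀ (by positivity)]; nlinarith
  have hm0 : 0 ≤ m := by
    have h : (-1 : ℝ) < (m : ℝ) := by linarith [habs.1]
    have h' : (-1 : ℤ) < m := by exact_mod_cast h
    omega
  have hm29 : m ≤ 29 := by
    have h : (m : ℝ) < 30 := by linarith [habs.2]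
    have h' : m < (30 : ℤ) := by exact_mod_cast h
    omega
  set φ : ℝ := 2*Real.pi*m/29 with hφ
  have hang : |θ' - φ| ≤ Real.pi/29 := by
    have heq : θ' - φ = (2*Real.pi/29) * (29 * θ' / (2*Real.pi) - m) := by
      field_simp
      ring
    rw [heq, abs_mul, abs_of_pos (by positivity : (0:ℝ) < 2*Real.pi/29)]
    have h12 : |29 * θ' / (2*Real.pi) - (m:ℝ)| ≤ 1/2 := abs_le.mpr habs
    nlinarith
  have hchord : cabs (Complex.exp ((θ:ℂ)*Complex.I) - Complex.exp ((φ:ℂ)*Complex.I))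
      ≤ Real.pi/29 := by
    rw [← hexp]
    have heq : Complex.exp ((θ':ℂ)*Complex.I) - Complex.exp ((φ:ℂ)*Complex.I)
        = Complex.exp ((φ:ℂ)*Complex.I) * (Complex.exp (((θ' - φ : ℝ):ℂ)*Complex.I) - 1) := by
      rw [mul_sub, mul_one, ← Complex.exp_add]
      push_cast
      ring_nf
    rw [heq, norm_mul, Complex.norm_exp_ofReal_mul_I, one_mul]
    exact le_trans (abs_exp_mul_I_sub_one _) hang
  have hml : ∃ l : ℕ, l ≤ 28 ∧
      Complex.exp ((l:ℂ)/29 * (2*(Real.pi:ℂ)*Complex.I)) = Complex.exp ((φ:ℂ)*Complex.I) := by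
    have hmφ : Complex.exp ((m:ℂ)/29 * (2*(Real.pi:ℂ)*Complex.I))
        = Complex.exp ((φ:ℂ)*Complex.I) := by
      congr 1
      rw [hφ]; push_cast; ring
    by_cases hm' : m = 29
    · refine ⟨0, by norm_num, ?_⟩
      rw [← hmφ, hm']
      norm_num [Complex.exp_two_pi_mul_I]
    · refine ⟨m.toNat, by omega, ?_⟩
      rw [← hmφ]
      have hcast : ((m.toNat : ℕ) : ℂ) = (m : ℂ) := by exact_mod_cast Int.toNat_of_nonneg hm0
      rw [hcast]
  obtain ⟨l, hl28, hlφ⟩ := hml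
  refine ⟨j, l, hl28, ?_, ?_⟩
  · have hw : (d:ℂ) * ((4/5:ℂ)^j * Complex.exp ((l:ℂ)/29 * (2*(Real.pi:ℂ)*Complex.I)))
        = (s:ℂ) * Complex.exp ((φ:ℂ)*Complex.I) := by
      rw [hlφ, hs]
      push_cast
      ring
    rw [hw]
    have hz' : z = (r:ℂ) * Complex.exp ((θ:ℂ)*Complex.I) :=
      (Complex.norm_mul_exp_arg_mul_I z).symm
    have htri := norm_sub_le_norm_sub_add_norm_sub z ((s:ℂ) * Complex.exp ((θ:ℂ)*Complex.I))
      ((s:ℂ) * Complex.exp ((φ:ℂ)*Complex.I))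
    have h1 : cabs (z - (s:ℂ) * Complex.exp ((θ:ℂ)*Complex.I)) ≤ r/5 := by
      rw [hz', show (r:ℂ) * Complex.exp ((θ:ℂ)*Complex.I) - (s:ℂ) * Complex.exp ((θ:ℂ)*Complex.I)
          = ((r - s : ℝ):ℂ) * Complex.exp ((θ:ℂ)*Complex.I) by push_cast; ring]
      rw [norm_mul, Complex.norm_exp_ofReal_mul_I, mul_one, Complex.norm_real, Real.norm_eq_abs,
        abs_of_nonneg (by linarith)]
      linarith
    have h2 : cabs ((s:ℂ) * Complex.exp ((θ:ℂ)*Complex.I)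
        - (s:ℂ) * Complex.exp ((φ:ℂ)*Complex.I)) ≤ r * (Real.pi/29) := by
      rw [show (s:ℂ) * Complex.exp ((θ:ℂ)*Complex.I) - (s:ℂ) * Complex.exp ((φ:ℂ)*Complex.I)
          = (s:ℂ) * (Complex.exp ((θ:ℂ)*Complex.I) - Complex.exp ((φ:ℂ)*Complex.I)) by ring]
      rw [norm_mul, Complex.norm_real, Real.norm_eq_abs, abs_of_pos hs0]
      exact mul_le_mul hsr hchord (norm_nonneg _) hr0.le
    have hpi315 : Real.pi < 3.15 := Real.pi_lt_d2
    calc cabs (z - (s:ℂ) * Complex.exp ((φ:ℂ)*Complex.I)) ≤ r/5 + r * (Real.pi/29) := by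
          linarith
      _ ≤ 1/3 * r := by nlinarith [hr0, hpi315]
  · have hw : (d:ℂ) * ((4/5:ℂ)^j * Complex.exp ((l:ℂ)/29 * (2*(Real.pi:ℂ)*Complex.I)))
        = (s:ℂ) * Complex.exp ((φ:ℂ)*Complex.I) := by
      rw [hlφ, hs]
      push_cast
      ring
    rw [hw, norm_mul, Complex.norm_exp_ofReal_mul_I, mul_one, Complex.norm_real, Real.norm_eq_abs,
      abs_of_pos hs0]
    exact hsr

/-- Lemma 3 of Butler: to any unit-norm `x ∈ ℂⁿ` and any diagonal matrix `D` with
positive real diagonal entries `d`, there is a step-vector `y ∈ ℂⁿ` with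
`‖x - D y‖ ≤ 1/3`, `‖D y‖ ≤ 1`, whose nonzero entries are all of the form
`(4/5)^j · e^{(ℓ/29)·2πi}` with `j ∈ ℤ` and `0 ≤ ℓ ≤ 28`. -/
theorem butler_step_vector_approximation {n : ℕ}
    (x : Fin n → ℂ) (hx : enormC x = 1)
    (d : Fin n → ℝ) (hd : ∀ i, 0 < d i) :
    ∃ y : Fin n → ℂ,
      enormC (fun i => x i - (d i : ℂ) * y i) ≤ 1 / 3 ∧
      enormC (fun i => (d i : ℂ) * y i) ≤ 1 ∧
      ∀ i, y i ≠ 0 → ∃ (j : ℤ) (l : ℕ), l ≤ 28 ∧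
        y i = (4 / 5 : ℂ) ^ j *
          Complex.exp ((l : ℂ) / 29 * (2 * (Real.pi : ℂ) * Complex.I)) := by
  classical
  have H : ∀ i, ∃ y : ℂ,
      cabs (x i - (d i : ℂ) * y) ≤ 1/3 * cabs (x i) ∧
      cabs ((d i : ℂ) * y) ≤ cabs (x i) ∧
      (y ≠ 0 → ∃ (j : ℤ) (l : ℕ), l ≤ 28 ∧
        y = (4/5:ℂ)^j * Complex.exp ((l:ℂ)/29*(2*(Real.pi:ℂ)*Complex.I))) := by
    intro i
    by_cases hzi : x i = 0
    · exact ⟨0, by simp [hzi], by simp, fun h => absurd rfl h⟩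
    · obtain ⟨j, l, hl, h1, h2⟩ := key (d i) (hd i) (x i) hzi
      exact ⟨_, h1, h2, fun _ => ⟨j, l, hl, rfl⟩⟩
  choose y hy1 hy2 hy3 using H
  have hsum : ∑ i, cabs (x i) ^ 2 = 1 := by
    have h := hx
    rw [enormC, Real.sqrt_eq_one] at h
    exact h
  refine ⟨y, ?_, ?_, fun i => hy3 i⟩
  · rw [enormC]
    have hb : ∑ i, cabs (x i - (d i:ℂ) * y i) ^ 2 ≤ 1/9 := by
      calc ∑ i, cabs (x i - (d i:ℂ) * y i) ^ 2
          ≤ ∑ i, (1/3 * cabs (x i)) ^ 2 :=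
            Finset.sum_le_sum (fun i _ => pow_le_pow_left₀ (norm_nonneg _) (hy1 i) 2)
        _ = 1/9 * ∑ i, cabs (x i) ^ 2 := by
            rw [Finset.mul_sum]
            exact Finset.sum_congr rfl (fun i _ => by ring)
        _ = 1/9 := by rw [hsum, mul_one]
    calc Real.sqrt (∑ i, cabs (x i - (d i:ℂ) * y i) ^ 2)
        ≤ Real.sqrt (1/9) := Real.sqrt_le_sqrt hb
      _ = 1/3 := by
          rw [show (1:ℝ)/9 = (1/3)^2 by norm_num, Real.sqrt_sq (by norm_num : (0:ℝ) ≤ 1/3)]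
  · rw [enormC]
    have hb : ∑ i, cabs ((d i:ℂ) * y i) ^ 2 ≤ 1 := by
      calc ∑ i, cabs ((d i:ℂ) * y i) ^ 2
          ≤ ∑ i, cabs (x i) ^ 2 :=
            Finset.sum_le_sum (fun i _ => pow_le_pow_left₀ (norm_nonneg _) (hy2 i) 2)
        _ = 1 := hsum
    calc Real.sqrt (∑ i, cabs ((d i:ℂ) * y i) ^ 2)
        ≤ Real.sqrt 1 := Real.sqrt_le_sqrt hb
      _ = 1 := Real.sqrt_one


end Stmt1
end

section
/- For any vector x ∈ ℝⁿ with ‖x‖ = 1 and any n×n diagonal matrix D with positive real diagonal entries, there exists a vector y ∈ ℂⁿ with ‖x − Dy‖ ≤ 1/3 and ‖Dy‖ ≤ 1 such that for each coordinate s: if x_s = 0 then y_s = 0; if x_s > 0 then y_s = (4/5)^j for some integer j; and if x_s < 0 then y_s = (4/5)^j · e^{(28/29)πi} for some integer j. -/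
open scoped BigOperators

namespace Stmt2

/-- The Euclidean norm of a complex vector. -/
noncomputable def enormC {N : ℕ} (v : Fin N → ℂ) : ℝ :=
  Real.sqrt (∑ i, ‖v i‖ ^ 2)

lemma cos_bound : (43/45 : ℝ) ≤ Real.cos (Real.pi / 29) := by
  have h1 : 1 - (Real.pi / 29) ^ 2 / 2 ≤ Real.cos (Real.pi / 29) :=
    Real.one_sub_sq_div_two_le_cos
  have hpi : Real.pi ≤ 4 := Real.pi_le_four
  have hpi0 : 0 ≤ Real.pi := Real.pi_pos.le
  nlinarith [sq_nonneg Real.pi]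

lemma coord (xs ds : ℝ) (hds : 0 < ds) :
    ∃ z : ℂ, (xs = 0 → z = 0) ∧
      (0 < xs → ∃ j : ℤ, z = (4 / 5 : ℂ) ^ j) ∧
      (xs < 0 → ∃ j : ℤ, z = (4 / 5 : ℂ) ^ j *
        Complex.exp ((28 / 29 : ℂ) * (Real.pi : ℂ) * Complex.I)) ∧
      ‖(xs : ℂ) - (ds : ℂ) * z‖ ^ 2 ≤ xs ^ 2 / 9 ∧
      ‖(ds : ℂ) * z‖ ^ 2 ≤ xs ^ 2 := by
  rcases lt_trichotomy xs 0 with hneg | hzero | hpos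
  · -- negative case
    have hm : 0 < -xs / ds := div_pos (by linarith) hds
    obtain ⟨n, h1, h2⟩ := exists_mem_Ico_zpow hm (by norm_num : (1:ℝ) < 5/4)
    -- a := ds * (5/4)^n ; we take z = (4/5)^(-n) * exp(θ I)
    set a : ℝ := (5/4 : ℝ) ^ n with ha
    have ha0 : 0 < a := zpow_pos (by norm_num) n
    have key1 : ds * a ≤ -xs := by
      rw [le_div_iff₀ hds] at h1; linarith
    have key2 : (4/5) * (-xs) < ds * a := by
      have h2' : -xs / ds < (5/4) ^ (n+1) := h2
      have : (5/4:ℝ) ^ (n+1) = (5/4) * a := by rw [ha, zpow_add_one₀ (by norm_num)]; ring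
      rw [this] at h2'
      have := (div_lt_iff₀ hds).mp h2'
      nlinarith
    refine ⟨(a : ℂ) * Complex.exp ((28 / 29 : ℂ) * (Real.pi : ℂ) * Complex.I),
      fun h => absurd h (by linarith), fun h => absurd h (by linarith), fun _ => ⟨-n, ?_⟩, ?_, ?_⟩
    · congr 1
      rw [show ((4:ℂ)/5) = ((5:ℂ)/4)⁻¹ by norm_num, inv_zpow, ← zpow_neg, neg_neg]
      push_cast [ha]
      norm_num
    · -- main estimate
      have hexp : Complex.exp ((28 / 29 : ℂ) * (Real.pi : ℂ) * Complex.I)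
          = (Real.cos ((28/29) * Real.pi) : ℂ) + (Real.sin ((28/29) * Real.pi) : ℂ) * Complex.I := by
        rw [show ((28 / 29 : ℂ) * (Real.pi : ℂ)) = (((28/29) * Real.pi : ℝ) : ℂ) by push_cast; ring,
          Complex.exp_mul_I, ← Complex.ofReal_cos, ← Complex.ofReal_sin]
      set c := Real.cos ((28/29) * Real.pi) with hc
      set s := Real.sin ((28/29) * Real.pi) with hs
      have habs : ‖(xs : ℂ) - (ds : ℂ) * ((a : ℂ) * Complex.exp ((28 / 29 : ℂ) * (Real.pi : ℂ) * Complex.I))‖ ^ 2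
          = (xs - ds * a * c) ^ 2 + (ds * a * s) ^ 2 := by
        rw [hexp, Complex.sq_norm]
        have : (xs : ℂ) - (ds : ℂ) * ((a:ℂ) * ((c:ℂ) + (s:ℂ) * Complex.I))
            = ((xs - ds * a * c : ℝ) : ℂ) + ((-(ds * a * s) : ℝ) : ℂ) * Complex.I := by
          push_cast; ring
        rw [this, Complex.normSq_add_mul_I]
        ring
      rw [habs]
      have hcs : s ^ 2 + c ^ 2 = 1 := Real.sin_sq_add_cos_sq _
      have hcval : c = -Real.cos (Real.pi / 29) := by
        rw [hc, show (28/29 : ℝ) * Real.pi = Real.pi - Real.pi / 29 by ring, Real.cos_pi_sub]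
      have hcb := cos_bound
      have hc1 : Real.cos (Real.pi / 29) ≤ 1 := Real.cos_le_one _
      -- let m = -xs, t = ds*a/m ∈ (4/5, 1]
      nlinarith [sq_nonneg (xs + ds*a), mul_pos hds ha0, key1, key2,
        mul_nonneg (mul_nonneg hds.le ha0.le) (by linarith : (0:ℝ) ≤ Real.cos (Real.pi/29) - 43/45),
        mul_nonneg (sub_nonneg.mpr key1) (by linarith [key2] : (0:ℝ) ≤ ds * a - (4/5) * (-xs)),
        mul_nonneg (mul_nonneg (sub_nonneg.mpr key1) (mul_pos hds ha0).le) (by linarith : (0:ℝ) ≤ 1 - Real.cos (Real.pi/29))]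
    · have : ‖(ds : ℂ) * ((a : ℂ) * Complex.exp ((28 / 29 : ℂ) * (Real.pi : ℂ) * Complex.I))‖ = ds * a := by
        rw [norm_mul, norm_mul, Complex.norm_exp]
        simp only [Complex.norm_real, Real.norm_eq_abs, abs_of_pos hds, abs_of_pos ha0]
        have : ((28 / 29 : ℂ) * (Real.pi : ℂ) * Complex.I).re = 0 := by simp
        rw [this, Real.exp_zero, mul_one]
      rw [this]
      nlinarith [key1, mul_pos hds ha0]
  · -- zero case
    exact ⟨0, fun _ => rfl, fun h => absurd h (by simp [hzero]),
      fun h => absurd h (by simp [hzero]), by simp [hzero], by simp [hzero]⟩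
  · -- positive case
    have hm : 0 < xs / ds := by positivity
    obtain ⟨n, h1, h2⟩ := exists_mem_Ico_zpow hm (by norm_num : (1:ℝ) < 5/4)
    set a : ℝ := (5/4 : ℝ) ^ n with ha
    have ha0 : 0 < a := zpow_pos (by norm_num) n
    have key1 : ds * a ≤ xs := by
      rw [le_div_iff₀ hds] at h1; linarith
    have key2 : (4/5) * xs < ds * a := by
      have h2' : xs / ds < (5/4) ^ (n+1) := h2
      have : (5/4:ℝ) ^ (n+1) = (5/4) * a := by rw [ha, zpow_add_one₀ (by norm_num)]; ring
      rw [this] at h2'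
      have := (div_lt_iff₀ hds).mp h2'
      nlinarith
    refine ⟨(a : ℂ), fun h => absurd h (by linarith), fun _ => ⟨-n, ?_⟩,
      fun h => absurd h (by linarith), ?_, ?_⟩
    · rw [show ((4:ℂ)/5) = ((5:ℂ)/4)⁻¹ by norm_num, inv_zpow, ← zpow_neg, neg_neg]
      push_cast [ha]
      norm_num
    · have : ((xs : ℂ) - (ds : ℂ) * (a : ℂ)) = ((xs - ds * a : ℝ) : ℂ) := by push_cast; ring
      rw [this, Complex.norm_real, Real.norm_eq_abs]
      rw [abs_of_nonneg (by linarith)]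
      nlinarith
    · have : ((ds : ℂ) * (a : ℂ)) = ((ds * a : ℝ) : ℂ) := by push_cast; ring
      rw [this, Complex.norm_real, Real.norm_eq_abs, abs_of_pos (mul_pos hds ha0)]
      nlinarith

/-- The refinement, for real input vectors, of Butler's step-vector
approximation: to any unit-norm `x ∈ ℝⁿ` and any diagonal matrix `D` with
positive real diagonal entries `d`, there is `y ∈ ℂⁿ` with `‖x - D y‖ ≤ 1/3`
and `‖D y‖ ≤ 1` such that coordinatewise: `x_s = 0 → y_s = 0`;
`x_s > 0 → y_s = (4/5)^j` for some `j ∈ ℤ`; and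
`x_s < 0 → y_s = (4/5)^j · e^{(28/29)πi}` for some `j ∈ ℤ`. -/
theorem butler_step_vector_approximation_real {n : ℕ}
    (x : Fin n → ℝ) (hx : Real.sqrt (∑ i, x i ^ 2) = 1)
    (d : Fin n → ℝ) (hd : ∀ i, 0 < d i) :
    ∃ y : Fin n → ℂ,
      enormC (fun i => (x i : ℂ) - (d i : ℂ) * y i) ≤ 1 / 3 ∧
      enormC (fun i => (d i : ℂ) * y i) ≤ 1 ∧
      ∀ s, (x s = 0 → y s = 0) ∧
        (0 < x s → ∃ j : ℤ, y s = (4 / 5 : ℂ) ^ j) ∧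
        (x s < 0 → ∃ j : ℤ, y s = (4 / 5 : ℂ) ^ j *
          Complex.exp ((28 / 29 : ℂ) * (Real.pi : ℂ) * Complex.I)) := by
  choose y h0 hpos hneg herr hnorm using fun s => coord (x s) (d s) (hd s)
  have hsum : (∑ i, x i ^ 2) = 1 := by
    have hnn : 0 ≤ ∑ i, x i ^ 2 := Finset.sum_nonneg fun i _ => sq_nonneg _
    have := Real.sq_sqrt hnn
    rw [hx] at this; linarith
  refine ⟨y, ?_, ?_, fun s => ⟨h0 s, hpos s, hneg s⟩⟩
  · unfold enormC
    have hb : (∑ i, ‖(x i : ℂ) - (d i : ℂ) * y i‖ ^ 2) ≤ 1/9 := by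
      calc (∑ i, ‖(x i : ℂ) - (d i : ℂ) * y i‖ ^ 2)
          ≤ ∑ i, x i ^ 2 / 9 := Finset.sum_le_sum fun i _ => herr i
        _ = 1/9 := by rw [← Finset.sum_div, hsum]
    calc Real.sqrt (∑ i, ‖(x i : ℂ) - (d i : ℂ) * y i‖ ^ 2)
        ≤ Real.sqrt (1/9) := Real.sqrt_le_sqrt hb
      _ = 1/3 := by rw [show (1/9 : ℝ) = (1/3)^2 by norm_num, Real.sqrt_sq (by norm_num)]
  · unfold enormC
    have hb : (∑ i, ‖(d i : ℂ) * y i‖ ^ 2) ≤ 1 := by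
      calc (∑ i, ‖(d i : ℂ) * y i‖ ^ 2)
          ≤ ∑ i, x i ^ 2 := Finset.sum_le_sum fun i _ => hnorm i
        _ = 1 := hsum
    calc Real.sqrt (∑ i, ‖(d i : ℂ) * y i‖ ^ 2)
        ≤ Real.sqrt 1 := Real.sqrt_le_sqrt hb
      _ = 1 := Real.sqrt_one

end Stmt2
end

section
/- Let M be a complex m×n matrix with largest singular value σ and corresponding unit-norm left and right singular vectors v ∈ ℂᵐ and u ∈ ℂⁿ. If x ∈ ℂᵐ and y ∈ ℂⁿ are vectors satisfying ‖x‖ ≤ 1, ‖y‖ ≤ 1, ‖v − x‖ ≤ 1/3, and ‖u − y‖ ≤ 1/3, then σ ≤ (9/2)·|⟨x, M y⟩|. -/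
open scoped BigOperators

namespace Stmt3

/-- The Euclidean norm of a complex vector. -/
noncomputable def enormC {N : ℕ} (v : Fin N → ℂ) : ℝ :=
  Real.sqrt (∑ i, ‖v i‖ ^ 2)

/-- The complex inner product `⟨x, y⟩ = ∑ conj(x_i) y_i`. -/
noncomputable def cinner {N : ℕ} (x y : Fin N → ℂ) : ℂ :=
  ∑ i, (starRingEnd ℂ) (x i) * y i

/-- The spectral norm of a complex matrix: the supremum of `‖A v‖` over unit
vectors `v`. -/
noncomputable def specNormC {M N : ℕ} (A : Matrix (Fin M) (Fin N) ℂ) : ℝ :=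
  sSup {t : ℝ | ∃ v : Fin N → ℂ, enormC v = 1 ∧ t = enormC (A.mulVec v)}

lemma enormC_eq {N : ℕ} (w : Fin N → ℂ) :
    enormC w = ‖(WithLp.equiv 2 (Fin N → ℂ)).symm w‖ := by
  rw [EuclideanSpace.norm_eq]
  simp [enormC]

lemma enormC_nonneg {N : ℕ} (w : Fin N → ℂ) : 0 ≤ enormC w := Real.sqrt_nonneg _

lemma enormC_smul {N : ℕ} (c : ℂ) (w : Fin N → ℂ) :
    enormC (fun i => c * w i) = ‖c‖ * enormC w := by
  rw [enormC_eq, enormC_eq w]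
  have h : ((WithLp.equiv 2 (Fin N → ℂ)).symm fun i => c * w i)
      = c • (WithLp.equiv 2 (Fin N → ℂ)).symm w := by
    ext i; simp
  rw [h, norm_smul]

lemma cinner_eq {N : ℕ} (x y : Fin N → ℂ) :
    cinner x y = @inner ℂ (EuclideanSpace ℂ (Fin N)) _
      ((WithLp.equiv 2 (Fin N → ℂ)).symm x) ((WithLp.equiv 2 (Fin N → ℂ)).symm y) := by
  rw [PiLp.inner_apply]
  simp [cinner, RCLike.inner_apply, mul_comm]

lemma cinner_abs_le {N : ℕ} (x y : Fin N → ℂ) :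
    ‖cinner x y‖ ≤ enormC x * enormC y := by
  rw [cinner_eq, enormC_eq, enormC_eq]
  exact norm_inner_le_norm _ _

lemma mulVec_enormC_le {m n : ℕ} (M : Matrix (Fin m) (Fin n) ℂ) (w : Fin n → ℂ) :
    enormC (M.mulVec w) ≤ specNormC M * enormC w := by
  set T : EuclideanSpace ℂ (Fin n) →L[ℂ] EuclideanSpace ℂ (Fin m) :=
    LinearMap.toContinuousLinearMap (Matrix.toEuclideanLin M)
  have hT : ∀ z : Fin n → ℂ, enormC (M.mulVec z) =
      ‖T ((WithLp.equiv 2 (Fin n → ℂ)).symm z)‖ := by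
    intro z
    rw [enormC_eq]
    rfl
  have hbdd : BddAbove {t : ℝ | ∃ z : Fin n → ℂ, enormC z = 1 ∧ t = enormC (M.mulVec z)} := by
    refine ⟨‖T‖, ?_⟩
    rintro t ⟨z, hz, rfl⟩
    rw [hT z]
    calc ‖T ((WithLp.equiv 2 (Fin n → ℂ)).symm z)‖
        ≤ ‖T‖ * ‖(WithLp.equiv 2 (Fin n → ℂ)).symm z‖ := T.le_opNorm _
      _ = ‖T‖ := by rw [← enormC_eq, hz, mul_one]
  by_cases hw : enormC w = 0
  · have hw0 : w = 0 := by
      rw [enormC_eq] at hw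
      have := norm_eq_zero.mp hw
      have := congrArg (WithLp.equiv 2 (Fin n → ℂ)) this
      simpa using this
    subst hw0
    simp only [Matrix.mulVec_zero]
    have : enormC (0 : Fin m → ℂ) = 0 := by
      rw [enormC_eq]
      rw [show ((WithLp.equiv 2 (Fin m → ℂ)).symm 0 : EuclideanSpace ℂ (Fin m)) = 0 from rfl]
      simp
    rw [this, hw, mul_zero]
  · have hwpos : 0 < enormC w := lt_of_le_of_ne (enormC_nonneg w) (Ne.symm hw)
    set z : Fin n → ℂ := fun i => (enormC w : ℂ)⁻¹ * w i with hzdef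
    have hz1 : enormC z = 1 := by
      rw [hzdef, enormC_smul]
      simp [norm_inv, Complex.norm_real, Real.norm_eq_abs, abs_of_pos hwpos, inv_mul_cancel₀ hw]
    have hle : enormC (M.mulVec z) ≤ specNormC M := le_csSup hbdd ⟨z, hz1, rfl⟩
    have hMzeq : M.mulVec z = fun i => (enormC w : ℂ)⁻¹ * (M.mulVec w) i := by
      ext i
      simp [hzdef, Matrix.mulVec, dotProduct, Finset.mul_sum, mul_comm, mul_assoc,
        mul_left_comm]
    rw [hMzeq, enormC_smul] at hle
    rw [norm_inv, Complex.norm_real, Real.norm_eq_abs, abs_of_pos hwpos] at hle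
    calc enormC (M.mulVec w) = enormC w * ((enormC w)⁻¹ * enormC (M.mulVec w)) := by
          field_simp
      _ ≤ enormC w * specNormC M := mul_le_mul_of_nonneg_left hle (le_of_lt hwpos)
      _ = specNormC M * enormC w := mul_comm _ _

/-- Lemma 4 of Butler: let `M` be a complex `m × n` matrix with largest singular
value `σ` and corresponding unit-norm singular vector pair `v, u` (so `‖v‖ = ‖u‖ = 1`
and `|⟨v, M u⟩| = σ` equals the spectral norm of `M`).  If `‖x‖ ≤ 1`, `‖y‖ ≤ 1`,
`‖v - x‖ ≤ 1/3` and `‖u - y‖ ≤ 1/3`, then `σ ≤ (9/2)·|⟨x, M y⟩|`. -/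
theorem singular_value_le_of_approximation {m n : ℕ}
    (M : Matrix (Fin m) (Fin n) ℂ) (σ : ℝ)
    (v : Fin m → ℂ) (u : Fin n → ℂ)
    (hv : enormC v = 1) (hu : enormC u = 1)
    (hσ : σ = specNormC M)
    (hvu : ‖cinner v (M.mulVec u)‖ = σ)
    (x : Fin m → ℂ) (y : Fin n → ℂ)
    (hx : enormC x ≤ 1) (hy : enormC y ≤ 1)
    (hvx : enormC (fun i => v i - x i) ≤ 1 / 3)
    (huy : enormC (fun i => u i - y i) ≤ 1 / 3) :
    σ ≤ (9 / 2) * ‖cinner x (M.mulVec y)‖ := by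
  have hσnn : 0 ≤ σ := hvu ▸ norm_nonneg _
  have h1 : cinner (fun i => v i - x i) (M.mulVec u)
      = cinner v (M.mulVec u) - cinner x (M.mulVec u) := by
    simp [cinner, sub_mul, Finset.sum_sub_distrib]
  have h2 : M.mulVec (fun i => u i - y i)
      = fun i => (M.mulVec u) i - (M.mulVec y) i := by
    have he : (fun i => u i - y i) = u - y := rfl
    rw [he, Matrix.mulVec_sub]; rfl
  have h3 : cinner x (M.mulVec (fun i => u i - y i))
      = cinner x (M.mulVec u) - cinner x (M.mulVec y) := by
    rw [h2]; simp [cinner, mul_sub, Finset.sum_sub_distrib]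
  have key : cinner v (M.mulVec u) = cinner x (M.mulVec y)
      + cinner (fun i => v i - x i) (M.mulVec u)
      + cinner x (M.mulVec (fun i => u i - y i)) := by
    rw [h1, h3]; ring
  have hMu : enormC (M.mulVec u) ≤ σ := by
    have := mulVec_enormC_le M u
    rw [hu, mul_one] at this
    rw [hσ]; exact this
  have hMuy : enormC (M.mulVec (fun i => u i - y i)) ≤ σ * (1 / 3) := by
    calc enormC (M.mulVec (fun i => u i - y i))
        ≤ specNormC M * enormC (fun i => u i - y i) := mulVec_enormC_le M _
      _ ≤ specNormC M * (1 / 3) := by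
          apply mul_le_mul_of_nonneg_left huy
          rw [← hσ]; exact hσnn
      _ = σ * (1 / 3) := by rw [hσ]
  have ha : ‖cinner (fun i => v i - x i) (M.mulVec u)‖ ≤ (1 / 3) * σ := by
    calc ‖cinner (fun i => v i - x i) (M.mulVec u)‖
        ≤ enormC (fun i => v i - x i) * enormC (M.mulVec u) := cinner_abs_le _ _
      _ ≤ (1 / 3) * σ := by
          apply mul_le_mul hvx hMu (enormC_nonneg _) (by norm_num)
  have hb : ‖cinner x (M.mulVec (fun i => u i - y i))‖ ≤ σ * (1 / 3) := by
    calc ‖cinner x (M.mulVec (fun i => u i - y i))‖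
        ≤ enormC x * enormC (M.mulVec (fun i => u i - y i)) := cinner_abs_le _ _
      _ ≤ 1 * (σ * (1 / 3)) := mul_le_mul hx hMuy (enormC_nonneg _) (by norm_num)
      _ = σ * (1 / 3) := one_mul _
  have htri : σ ≤ ‖cinner x (M.mulVec y)‖ + (1 / 3) * σ + σ * (1 / 3) := by
    calc σ = ‖cinner v (M.mulVec u)‖ := hvu.symm
      _ = ‖cinner x (M.mulVec y)
          + cinner (fun i => v i - x i) (M.mulVec u)
          + cinner x (M.mulVec (fun i => u i - y i))‖ := by rw [← key]
      _ ≤ ‖cinner x (M.mulVec y)‖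
          + ‖cinner (fun i => v i - x i) (M.mulVec u)‖
          + ‖cinner x (M.mulVec (fun i => u i - y i))‖ := by
            apply le_trans (norm_add_le _ _)
            exact add_le_add_left (norm_add_le _ _) _
      _ ≤ ‖cinner x (M.mulVec y)‖ + (1 / 3) * σ + σ * (1 / 3) := by
            exact add_le_add (add_le_add_right ha _) hb
  linarith


end Stmt3
end

section
/- Let C be an m×n matrix of nonnegative real entries, and let d_{r,1},…,d_{r,m} and d_{c,1},…,d_{c,n} be positive real row- and column-weights collected in diagonal matrices D_r and D_c. Let R_1,…,R_k and C_1,…,C_ℓ be proper partitions of the rows and columns, and let x ∈ ℂᵐ and y ∈ ℂⁿ be stepwise constant vectors (constant on each R_a and on each C_b, respectively). Define the k×ℓ real matrix C′ by c′_{ab} = c(R_a,C_b)/√(VOL(R_a)·VOL(C_b)), where c(R_a,C_b) = Σ_{i∈R_a}Σ_{j∈C_b} c_{ij}, VOL(R_a) = Σ_{i∈R_a} d_{r,i}, VOL(C_b) = Σ_{j∈C_b} d_{c,j}. Then |⟨x, C y⟩| ≤ ‖C′‖ · ‖D_r^{1/2} x‖ · ‖D_c^{1/2} y‖, where ‖C′‖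 is the spectral norm (largest singular value) of C′. -/
open scoped BigOperators

namespace Stmt4

/-- The Euclidean norm of a complex vector. -/
noncomputable def enormC {N : ℕ} (v : Fin N → ℂ) : ℝ :=
  Real.sqrt (∑ i, ‖v i‖ ^ 2)

/-- The Euclidean norm of a real vector. -/
noncomputable def enormR {N : ℕ} (v : Fin N → ℝ) : ℝ :=
  Real.sqrt (∑ i, v i ^ 2)

/-- The complex inner product `⟨x, y⟩ = ∑ conj(x_i) y_i`. -/
noncomputable def cinner {N : ℕ} (x y : Fin N → ℂ) : ℂ :=
  ∑ i, (starRingEnd ℂ) (x i) * y i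

/-- The spectral norm (largest singular value) of a real matrix: the supremum of
`‖A v‖` over unit vectors `v`. -/
noncomputable def specNormR {M N : ℕ} (A : Matrix (Fin M) (Fin N) ℝ) : ℝ :=
  sSup {t : ℝ | ∃ v : Fin N → ℝ, enormR v = 1 ∧ t = enormR (A.mulVec v)}

/-- The cut `c(X,Y)` of `C` between a row-subset `X` and a column-subset `Y`. -/
noncomputable def cut {m n : ℕ} (C : Matrix (Fin m) (Fin n) ℝ)
    (X : Finset (Fin m)) (Y : Finset (Fin n)) : ℝ :=
  ∑ i ∈ X, ∑ j ∈ Y, C i j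

/-- A proper partition: nonempty parts, pairwise disjoint, covering everything. -/
def IsProperPartition {N k : ℕ} (P : Fin k → Finset (Fin N)) : Prop :=
  (∀ a, (P a).Nonempty) ∧ (∀ a b, a ≠ b → Disjoint (P a) (P b)) ∧ (∀ i, ∃ a, i ∈ P a)

lemma enormR_nonneg {N : ℕ} (v : Fin N → ℝ) : 0 ≤ enormR v := Real.sqrt_nonneg _

lemma enormR_sq_eq {N : ℕ} (v : Fin N → ℝ) : enormR v ^ 2 = ∑ i, v i ^ 2 :=
  Real.sq_sqrt (Finset.sum_nonneg fun i _ => sq_nonneg _)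

lemma enormR_smul {N : ℕ} (t : ℝ) (ht : 0 ≤ t) (v : Fin N → ℝ) :
    enormR (fun i => t * v i) = t * enormR v := by
  unfold enormR
  have h : ∑ i, (t * v i) ^ 2 = t ^ 2 * ∑ i, v i ^ 2 := by
    rw [Finset.mul_sum]; exact Finset.sum_congr rfl fun i _ => by ring
  rw [h, Real.sqrt_mul (sq_nonneg t), Real.sqrt_sq ht]

lemma bddAbove_spec {M N : ℕ} (A : Matrix (Fin M) (Fin N) ℝ) :
    BddAbove {t : ℝ | ∃ v : Fin N → ℝ, enormR v = 1 ∧ t = enormR (A.mulVec v)} := by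
  refine ⟨Real.sqrt (∑ a, ∑ b, A a b ^ 2), ?_⟩
  rintro t ⟨v, hv, rfl⟩
  have hsum : ∑ b, v b ^ 2 = 1 := by
    have h := enormR_sq_eq v; rw [hv] at h; simpa using h.symm
  unfold enormR
  apply Real.sqrt_le_sqrt
  refine Finset.sum_le_sum fun a _ => ?_
  calc (A.mulVec v a) ^ 2 = (∑ b, A a b * v b) ^ 2 := by
        simp [Matrix.mulVec, dotProduct]
    _ ≤ (∑ b, A a b ^ 2) * ∑ b, v b ^ 2 :=
        Finset.sum_mul_sq_le_sq_mul_sq Finset.univ (fun b => A a b) v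
    _ = ∑ b, A a b ^ 2 := by rw [hsum, mul_one]

lemma enormR_mulVec_le {M N : ℕ} (A : Matrix (Fin M) (Fin N) ℝ) (v : Fin N → ℝ) :
    enormR (A.mulVec v) ≤ specNormR A * enormR v := by
  by_cases hv : enormR v = 0
  · have h0 : ∑ i, v i ^ 2 = 0 := by
      have h := enormR_sq_eq v; rw [hv] at h; simpa using h.symm
    have hz : v = 0 := by
      funext i
      have := (Finset.sum_eq_zero_iff_of_nonneg (fun i _ => sq_nonneg (v i))).1 h0 i
        (Finset.mem_univ i)
      exact pow_eq_zero_iff two_ne_zero |>.mp this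
    rw [hz, show enormR (0 : Fin N → ℝ) = 0 by simp [enormR], mul_zero]
    simp [Matrix.mulVec_zero, enormR]
  · have hpos : 0 < enormR v := lt_of_le_of_ne (enormR_nonneg v) (Ne.symm hv)
    set c := enormR v with hc
    have hw : enormR (fun b => c⁻¹ * v b) = 1 := by
      rw [enormR_smul c⁻¹ (inv_nonneg.2 hpos.le) v, ← hc, inv_mul_cancel₀ hv]
    have hAw : A.mulVec (fun b => c⁻¹ * v b) = fun a => c⁻¹ * A.mulVec v a := by
      funext a
      simp [Matrix.mulVec, dotProduct, Finset.mul_sum]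
      exact Finset.sum_congr rfl fun b _ => by ring
    have hmem : enormR (A.mulVec (fun b => c⁻¹ * v b)) ∈
        {t : ℝ | ∃ v : Fin N → ℝ, enormR v = 1 ∧ t = enormR (A.mulVec v)} :=
      ⟨_, hw, rfl⟩
    have hle := le_csSup (bddAbove_spec A) hmem
    rw [hAw, enormR_smul c⁻¹ (inv_nonneg.2 hpos.le)] at hle
    have := mul_le_mul_of_nonneg_left hle hpos.le
    rw [← mul_assoc, mul_inv_cancel₀ hv, one_mul] at this
    calc enormR (A.mulVec v) ≤ c * specNormR A := this
      _ = specNormR A * c := mul_comm _ _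

lemma specNormR_nonneg {M N : ℕ} (hN : N ≠ 0) (A : Matrix (Fin M) (Fin N) ℝ) :
    0 ≤ specNormR A := by
  have i0 : Fin N := ⟨0, Nat.pos_of_ne_zero hN⟩
  classical
  have hone : ∀ b : Fin N, (if b = i0 then (1:ℝ) else 0) ^ 2 = if b = i0 then 1 else 0 := by
    intro b; split <;> norm_num
  have hv : enormR (fun b => if b = i0 then (1:ℝ) else 0) = 1 := by
    unfold enormR
    rw [Finset.sum_congr rfl fun b _ => hone b, Finset.sum_ite_eq' Finset.univ i0 (fun _ => (1:ℝ))]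
    simp
  have hmem : enormR (A.mulVec (fun b => if b = i0 then (1:ℝ) else 0)) ∈
      {t : ℝ | ∃ v : Fin N → ℝ, enormR v = 1 ∧ t = enormR (A.mulVec v)} := ⟨_, hv, rfl⟩
  exact le_trans (enormR_nonneg _) (le_csSup (bddAbove_spec A) hmem)


/-- Lemma 3 (the author's own): with row-weights `dr`, column-weights `dc`
(arbitrary positive reals, independent of the entries of `C`), proper partitions
`R_1,…,R_k` of the rows and `C_1,…,C_ℓ` of the columns, stepwise constant vectors
`x ∈ ℂᵐ`, `y ∈ ℂⁿ`, and the `k × ℓ` matrix `C'` with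
`c'_{ab} = c(R_a,C_b)/√(VOL(R_a)·VOL(C_b))`, one has
`|⟨x, C y⟩| ≤ ‖C'‖ · ‖D_r^{1/2} x‖ · ‖D_c^{1/2} y‖`. -/
theorem inner_bound_via_block_matrix {m n k l : ℕ}
    (C : Matrix (Fin m) (Fin n) ℝ)
    (hnonneg : ∀ i j, 0 ≤ C i j)
    (dr : Fin m → ℝ) (dc : Fin n → ℝ)
    (hdr : ∀ i, 0 < dr i) (hdc : ∀ j, 0 < dc j)
    (R : Fin k → Finset (Fin m)) (Cc : Fin l → Finset (Fin n))
    (hR : IsProperPartition R) (hCc : IsProperPartition Cc)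
    (x : Fin m → ℂ) (y : Fin n → ℂ)
    (hx : ∀ a : Fin k, ∀ i ∈ R a, ∀ i' ∈ R a, x i = x i')
    (hy : ∀ b : Fin l, ∀ j ∈ Cc b, ∀ j' ∈ Cc b, y j = y j')
    (C' : Matrix (Fin k) (Fin l) ℝ)
    (hC' : ∀ a b, C' a b =
      cut C (R a) (Cc b) /
        Real.sqrt ((∑ i ∈ R a, dr i) * (∑ j ∈ Cc b, dc j))) :
    ‖cinner x ((C.map (fun r => (r : ℂ))).mulVec y)‖ ≤
      specNormR C' * enormC (fun i => (Real.sqrt (dr i) : ℂ) * x i) *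
        enormC (fun j => (Real.sqrt (dc j) : ℂ) * y j) := by
  classical
  obtain ⟨hRne, hRdisj, hRcov⟩ := hR
  obtain ⟨hCne, hCdisj, hCcov⟩ := hCc
  by_cases hl0 : l = 0
  · -- then n = 0, both sides are 0
    have hn0 : n = 0 := by
      by_contra hn
      obtain ⟨b, _⟩ := hCcov ⟨0, Nat.pos_of_ne_zero hn⟩
      subst hl0; exact absurd b.2 (by omega)
    subst hn0
    have hy0 : (C.map (fun r => (r : ℂ))).mulVec y = 0 := by
      funext i; simp [Matrix.mulVec, dotProduct]
    have h1 : cinner x ((C.map (fun r => (r : ℂ))).mulVec y) = 0 := by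
      rw [hy0]; simp [cinner]
    have h2 : enormC (fun j : Fin 0 => (Real.sqrt (dc j) : ℂ) * y j) = 0 := by
      simp [enormC]
    rw [h1, h2, mul_zero, norm_zero]
  · -- main case
    set V : Fin k → ℝ := fun a => ∑ i ∈ R a, dr i with hV
    set W : Fin l → ℝ := fun b => ∑ j ∈ Cc b, dc j with hW
    have hVpos : ∀ a, 0 < V a := fun a => Finset.sum_pos (fun i _ => hdr i) (hRne a)
    have hWpos : ∀ b, 0 < W b := fun b => Finset.sum_pos (fun j _ => hdc j) (hCne b)
    -- fiber maps
    set σ : Fin m → Fin k := fun i => (hRcov i).choose with hσdef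
    have hσ : ∀ i, i ∈ R (σ i) := fun i => (hRcov i).choose_spec
    have hRfib : ∀ a, R a = Finset.univ.filter (fun i => σ i = a) := by
      intro a; ext i
      simp only [Finset.mem_filter, Finset.mem_univ, true_and]
      constructor
      · intro hi
        by_contra hne
        exact (Finset.disjoint_left.1 (hRdisj _ _ hne) (hσ i)) hi
      · intro h; rw [← h]; exact hσ i
    set τ : Fin n → Fin l := fun j => (hCcov j).choose with hτdef
    have hτ : ∀ j, j ∈ Cc (τ j) := fun j => (hCcov j).choose_spec
    have hCfib : ∀ b, Cc b = Finset.univ.filter (fun j => τ j = b) := by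
      intro b; ext j
      simp only [Finset.mem_filter, Finset.mem_univ, true_and]
      constructor
      · intro hj
        by_contra hne
        exact (Finset.disjoint_left.1 (hCdisj _ _ hne) (hτ j)) hj
      · intro h; rw [← h]; exact hτ j
    have hsumR : ∀ {β : Type} [AddCommMonoid β] (G : Fin m → β),
        ∑ i, G i = ∑ a, ∑ i ∈ R a, G i := by
      intro β _ G
      rw [← Finset.sum_fiberwise Finset.univ σ G]
      exact Finset.sum_congr rfl fun a _ => by rw [hRfib a]
    have hsumC : ∀ {β : Type} [AddCommMonoid β] (G : Fin n → β),
        ∑ j, G j = ∑ b, ∑ j ∈ Cc b, G j := by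
      intro β _ G
      rw [← Finset.sum_fiberwise Finset.univ τ G]
      exact Finset.sum_congr rfl fun b _ => by rw [hCfib b]
    -- representatives
    set ξ : Fin k → ℂ := fun a => x ((hRne a).choose) with hξdef
    have hξ : ∀ a, ∀ i ∈ R a, x i = ξ a := fun a i hi =>
      hx a i hi _ (hRne a).choose_spec
    set η : Fin l → ℂ := fun b => y ((hCne b).choose) with hηdef
    have hη : ∀ b, ∀ j ∈ Cc b, y j = η b := fun b j hj =>
      hy b j hj _ (hCne b).choose_spec
    set F : Fin m → Fin n → ℂ :=
      fun i j => (starRingEnd ℂ) (x i) * (C i j : ℂ) * y j with hF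
    -- p and q vectors
    set p : Fin k → ℂ := fun a => (starRingEnd ℂ) (ξ a) * (Real.sqrt (V a) : ℂ) with hp
    set q : Fin l → ℂ := fun b => η b * (Real.sqrt (W b) : ℂ) with hq
    set T : Fin k → ℂ := fun a => ∑ b, (C' a b : ℂ) * q b with hT
    have hcut : ∀ a b, cut C (R a) (Cc b) = C' a b * (Real.sqrt (V a) * Real.sqrt (W b)) := by
      intro a b
      have hpos : 0 < Real.sqrt (V a * W b) :=
        Real.sqrt_pos.2 (mul_pos (hVpos a) (hWpos b))
      rw [hC' a b, ← Real.sqrt_mul (hVpos a).le]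
      field_simp
      exact (mul_div_cancel_right₀ _ hpos.ne').symm
    -- the key identity
    have key : cinner x ((C.map (fun r => (r : ℂ))).mulVec y) = ∑ a, p a * T a := by
      calc cinner x ((C.map (fun r => (r : ℂ))).mulVec y)
          = ∑ i, ∑ j, F i j := by
            unfold cinner
            refine Finset.sum_congr rfl fun i _ => ?_
            rw [Matrix.mulVec, dotProduct, Finset.mul_sum]
            exact Finset.sum_congr rfl fun j _ => by
              simp [hF, Matrix.map_apply]; ring
        _ = ∑ a, ∑ i ∈ R a, ∑ j, F i j := hsumR _
        _ = ∑ a, ∑ i ∈ R a, ∑ b, ∑ j ∈ Cc b, F i j :=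
            Finset.sum_congr rfl fun a _ => Finset.sum_congr rfl fun i _ => hsumC _
        _ = ∑ a, ∑ b, ∑ i ∈ R a, ∑ j ∈ Cc b, F i j :=
            Finset.sum_congr rfl fun a _ => Finset.sum_comm
        _ = ∑ a, ∑ b, (starRingEnd ℂ) (ξ a) * η b * ((cut C (R a) (Cc b) : ℝ) : ℂ) := by
            refine Finset.sum_congr rfl fun a _ => Finset.sum_congr rfl fun b _ => ?_
            rw [show ((cut C (R a) (Cc b) : ℝ) : ℂ)
                = ∑ i ∈ R a, ∑ j ∈ Cc b, (C i j : ℂ) by push_cast [cut]; rfl]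
            rw [Finset.mul_sum]
            refine Finset.sum_congr rfl fun i hi => ?_
            rw [Finset.mul_sum]
            refine Finset.sum_congr rfl fun j hj => ?_
            simp only [hF]
            rw [hξ a i hi, hη b j hj]
            ring
        _ = ∑ a, p a * T a := by
            refine Finset.sum_congr rfl fun a _ => ?_
            simp only [hT, hp, hq]
            rw [Finset.mul_sum]
            refine Finset.sum_congr rfl fun b _ => ?_
            rw [hcut a b]
            push_cast
            ring
    -- norms of p and q
    have hpnorm : Real.sqrt (∑ a, ‖p a‖ ^ 2)
        = enormC (fun i => (Real.sqrt (dr i) : ℂ) * x i) := by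
      unfold enormC
      congr 1
      have h1 : ∀ a, ‖p a‖ ^ 2 = ‖ξ a‖ ^ 2 * V a := by
        intro a
        simp only [hp]
        rw [norm_mul, mul_pow]
        congr 1
        · rw [Complex.norm_conj]
        · rw [Complex.norm_real, Real.norm_eq_abs, abs_of_nonneg (Real.sqrt_nonneg _),
            Real.sq_sqrt (hVpos a).le]
      calc ∑ a, ‖p a‖ ^ 2
          = ∑ a, ‖ξ a‖ ^ 2 * V a := Finset.sum_congr rfl fun a _ => h1 a
        _ = ∑ a, ∑ i ∈ R a, ‖x i‖ ^ 2 * dr i := by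
            refine Finset.sum_congr rfl fun a _ => ?_
            show ‖ξ a‖ ^ 2 * (∑ i ∈ R a, dr i) = _
            rw [Finset.mul_sum]
            refine Finset.sum_congr rfl fun i hi => ?_
            rw [← hξ a i hi]
        _ = ∑ i, ‖x i‖ ^ 2 * dr i := (hsumR _).symm
        _ = ∑ i, ‖(Real.sqrt (dr i) : ℂ) * x i‖ ^ 2 := by
            refine Finset.sum_congr rfl fun i _ => ?_
            rw [norm_mul, mul_pow, Complex.norm_real, Real.norm_eq_abs,
              abs_of_nonneg (Real.sqrt_nonneg _), Real.sq_sqrt (hdr i).le]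
            ring
    have hqnorm : Real.sqrt (∑ b, ‖q b‖ ^ 2)
        = enormC (fun j => (Real.sqrt (dc j) : ℂ) * y j) := by
      unfold enormC
      congr 1
      have h1 : ∀ b, ‖q b‖ ^ 2 = ‖η b‖ ^ 2 * W b := by
        intro b
        simp only [hq]
        rw [norm_mul, mul_pow]
        congr 1
        rw [Complex.norm_real, Real.norm_eq_abs, abs_of_nonneg (Real.sqrt_nonneg _),
          Real.sq_sqrt (hWpos b).le]
      calc ∑ b, ‖q b‖ ^ 2
          = ∑ b, ‖η b‖ ^ 2 * W b := Finset.sum_congr rfl fun b _ => h1 b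
        _ = ∑ b, ∑ j ∈ Cc b, ‖y j‖ ^ 2 * dc j := by
            refine Finset.sum_congr rfl fun b _ => ?_
            show ‖η b‖ ^ 2 * (∑ j ∈ Cc b, dc j) = _
            rw [Finset.mul_sum]
            refine Finset.sum_congr rfl fun j hj => ?_
            rw [← hη b j hj]
        _ = ∑ j, ‖y j‖ ^ 2 * dc j := (hsumC _).symm
        _ = ∑ j, ‖(Real.sqrt (dc j) : ℂ) * y j‖ ^ 2 := by
            refine Finset.sum_congr rfl fun j _ => ?_
            rw [norm_mul, mul_pow, Complex.norm_real, Real.norm_eq_abs,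
              abs_of_nonneg (Real.sqrt_nonneg _), Real.sq_sqrt (hdc j).le]
            ring
    -- bound on T
    set qr : Fin l → ℝ := fun b => (q b).re with hqr
    set qi : Fin l → ℝ := fun b => (q b).im with hqi
    have hTre : ∀ a, (T a).re = C'.mulVec qr a := by
      intro a
      simp only [hT, Complex.re_sum, Matrix.mulVec, dotProduct]
      refine Finset.sum_congr rfl fun b _ => ?_
      simp [Complex.mul_re, hqr]
    have hTim : ∀ a, (T a).im = C'.mulVec qi a := by
      intro a
      simp only [hT, Complex.im_sum, Matrix.mulVec, dotProduct]
      refine Finset.sum_congr rfl fun b _ => ?_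
      simp [Complex.mul_im, hqi]
    have hspec : 0 ≤ specNormR C' := specNormR_nonneg hl0 C'
    have hTsum : ∑ a, ‖T a‖ ^ 2
        ≤ specNormR C' ^ 2 * ∑ b, ‖q b‖ ^ 2 := by
      have h1 : ∑ a, ‖T a‖ ^ 2
          = enormR (C'.mulVec qr) ^ 2 + enormR (C'.mulVec qi) ^ 2 := by
        rw [enormR_sq_eq, enormR_sq_eq, ← Finset.sum_add_distrib]
        refine Finset.sum_congr rfl fun a _ => ?_
        rw [Complex.sq_norm, Complex.normSq_apply, hTre a, hTim a]
        ring
      have h2 : ∑ b, ‖q b‖ ^ 2 = enormR qr ^ 2 + enormR qi ^ 2 := by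
        rw [enormR_sq_eq, enormR_sq_eq, ← Finset.sum_add_distrib]
        refine Finset.sum_congr rfl fun b _ => ?_
        rw [Complex.sq_norm, Complex.normSq_apply]
        simp [hqr, hqi]
        ring
      rw [h1, h2]
      have hr := enormR_mulVec_le C' qr
      have hi := enormR_mulVec_le C' qi
      have hr2 : enormR (C'.mulVec qr) ^ 2 ≤ (specNormR C' * enormR qr) ^ 2 :=
        pow_le_pow_left₀ (enormR_nonneg _) hr 2
      have hi2 : enormR (C'.mulVec qi) ^ 2 ≤ (specNormR C' * enormR qi) ^ 2 :=
        pow_le_pow_left₀ (enormR_nonneg _) hi 2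
      calc enormR (C'.mulVec qr) ^ 2 + enormR (C'.mulVec qi) ^ 2
          ≤ (specNormR C' * enormR qr) ^ 2 + (specNormR C' * enormR qi) ^ 2 :=
            add_le_add hr2 hi2
        _ = specNormR C' ^ 2 * (enormR qr ^ 2 + enormR qi ^ 2) := by ring
    have hTnorm : Real.sqrt (∑ a, ‖T a‖ ^ 2)
        ≤ specNormR C' * enormC (fun j => (Real.sqrt (dc j) : ℂ) * y j) := by
      rw [← hqnorm]
      calc Real.sqrt (∑ a, ‖T a‖ ^ 2)
          ≤ Real.sqrt (specNormR C' ^ 2 * ∑ b, ‖q b‖ ^ 2) :=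
            Real.sqrt_le_sqrt hTsum
        _ = specNormR C' * Real.sqrt (∑ b, ‖q b‖ ^ 2) := by
            rw [Real.sqrt_mul (sq_nonneg _), Real.sqrt_sq hspec]
    -- final assembly
    have e1nonneg : 0 ≤ enormC (fun i => (Real.sqrt (dr i) : ℂ) * x i) :=
      Real.sqrt_nonneg _
    calc ‖cinner x ((C.map (fun r => (r : ℂ))).mulVec y)‖
        = ‖∑ a, p a * T a‖ := by rw [key]
      _ ≤ ∑ a, ‖p a * T a‖ := norm_sum_le _ _
      _ = ∑ a, ‖p a‖ * ‖T a‖ := by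
          exact Finset.sum_congr rfl fun a _ => norm_mul _ _
      _ ≤ Real.sqrt (∑ a, ‖p a‖ ^ 2) *
            Real.sqrt (∑ a, ‖T a‖ ^ 2) :=
          Real.sum_mul_le_sqrt_mul_sqrt _ _ _
      _ ≤ enormC (fun i => (Real.sqrt (dr i) : ℂ) * x i) *
            (specNormR C' * enormC (fun j => (Real.sqrt (dc j) : ℂ) * y j)) := by
          rw [hpnorm]
          exact mul_le_mul_of_nonneg_left hTnorm e1nonneg
      _ = specNormR C' * enormC (fun i => (Real.sqrt (dr i) : ℂ) * x i) *
            enormC (fun j => (Real.sqrt (dc j) : ℂ) * y j) := by ring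

end Stmt4
end

section
/- For every edge-weighted undirected graph G = (V, W) with irreducible weight matrix, disc_1(G) ≤ ‖M_D‖, where ‖M_D‖ is the spectral norm of the normalized modularity matrix of G (which equals the largest nontrivial singular value s_1 = |μ_1| of the normalized weight matrix W_D = D^{-1/2} W D^{-1/2}). -/
open scoped BigOperators

namespace Stmt6

variable {n : ℕ}

/-- The degree `d_i = ∑ j, w_{ij}` of vertex `i`. -/
noncomputable def deg (W : Matrix (Fin n) (Fin n) ℝ) (i : Fin n) : ℝ := ∑ j, W i j

/-- The volume `Vol(U) = ∑_{i ∈ U} d_i` of a vertex subset. -/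
noncomputable def vol (W : Matrix (Fin n) (Fin n) ℝ) (U : Finset (Fin n)) : ℝ :=
  ∑ i ∈ U, deg W i

/-- The cut `w(X,Y) = ∑_{i ∈ X} ∑_{j ∈ Y} w_{ij}`. -/
noncomputable def cut (W : Matrix (Fin n) (Fin n) ℝ) (X Y : Finset (Fin n)) : ℝ :=
  ∑ i ∈ X, ∑ j ∈ Y, W i j

/-- The 1-way discrepancy `disc_1(G)`: the maximum over all `X, Y ⊆ V` of
`|w(X,Y) - Vol(X) Vol(Y)| / √(Vol(X) Vol(Y))` (note `ρ(V,V) = 1` since the total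
weight is 1). -/
noncomputable def disc1 (W : Matrix (Fin n) (Fin n) ℝ) : ℝ :=
  sSup {t : ℝ | ∃ X Y : Finset (Fin n),
    t = |cut W X Y - vol W X * vol W Y| / Real.sqrt (vol W X * vol W Y)}

/-- The normalized modularity matrix `M_D = D^{-1/2} (W - d dᵀ) D^{-1/2}`. -/
noncomputable def MD (W : Matrix (Fin n) (Fin n) ℝ) : Matrix (Fin n) (Fin n) ℝ :=
  Matrix.diagonal (fun i => (Real.sqrt (deg W i))⁻¹) *
    (W - Matrix.of fun i j => deg W i * deg W j) *
    Matrix.diagonal (fun i => (Real.sqrt (deg W i))⁻¹)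

/-- The Euclidean norm of a real vector. -/
noncomputable def enormR {N : ℕ} (v : Fin N → ℝ) : ℝ :=
  Real.sqrt (∑ i, v i ^ 2)

/-- The spectral norm of a real matrix: the supremum of `‖A v‖` over unit vectors. -/
noncomputable def specNormR {M N : ℕ} (A : Matrix (Fin M) (Fin N) ℝ) : ℝ :=
  sSup {t : ℝ | ∃ v : Fin N → ℝ, enormR v = 1 ∧ t = enormR (A.mulVec v)}

/-- Irreducibility of a (nonnegative) square matrix. -/
def MatIrreducible (M : Matrix (Fin n) (Fin n) ℝ) : Prop :=
  ∀ i j, ∃ t : ℕ, 1 ≤ t ∧ 0 < (M ^ t) i j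

lemma enormR_nonneg {N : ℕ} (v : Fin N → ℝ) : 0 ≤ enormR v := Real.sqrt_nonneg _

lemma abs_sum_mul_le {N : ℕ} (f g : Fin N → ℝ) :
    |∑ i, f i * g i| ≤ enormR f * enormR g := by
  calc |∑ i, f i * g i| = Real.sqrt ((∑ i, f i * g i) ^ 2) := (Real.sqrt_sq_eq_abs _).symm
    _ ≤ Real.sqrt ((∑ i, f i ^ 2) * ∑ i, g i ^ 2) :=
        Real.sqrt_le_sqrt (Finset.sum_mul_sq_le_sq_mul_sq _ _ _)
    _ = enormR f * enormR g := by
        rw [Real.sqrt_mul (Finset.sum_nonneg fun _ _ => sq_nonneg _)]; rfl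

lemma enormR_smul {N : ℕ} (c : ℝ) (v : Fin N → ℝ) :
    enormR (c • v) = |c| * enormR v := by
  unfold enormR
  simp only [Pi.smul_apply, smul_eq_mul, mul_pow]
  rw [← Finset.mul_sum, Real.sqrt_mul (sq_nonneg c), Real.sqrt_sq_eq_abs]

lemma specNormR_bddAbove {M N : ℕ} (A : Matrix (Fin M) (Fin N) ℝ) :
    BddAbove {t : ℝ | ∃ v : Fin N → ℝ, enormR v = 1 ∧ t = enormR (A.mulVec v)} := by
  refine ⟨Real.sqrt (∑ i, ∑ j, A i j ^ 2), ?_⟩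
  rintro t ⟨v, hv, rfl⟩
  have hv2 : ∑ j, v j ^ 2 = 1 := by
    have h0 : 0 ≤ ∑ j, v j ^ 2 := Finset.sum_nonneg fun _ _ => sq_nonneg _
    have := congrArg (· ^ 2) hv
    simpa [enormR, Real.sq_sqrt h0] using this
  unfold enormR
  apply Real.sqrt_le_sqrt
  apply Finset.sum_le_sum
  intro i _
  calc (A.mulVec v i) ^ 2 = (∑ j, A i j * v j) ^ 2 := rfl
    _ ≤ (∑ j, A i j ^ 2) * ∑ j, v j ^ 2 := Finset.sum_mul_sq_le_sq_mul_sq _ _ _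
    _ = ∑ j, A i j ^ 2 := by rw [hv2, mul_one]

lemma enormR_mulVec_le {M N : ℕ} (A : Matrix (Fin M) (Fin N) ℝ) (v : Fin N → ℝ) :
    enormR (A.mulVec v) ≤ specNormR A * enormR v := by
  by_cases hv : enormR v = 0
  · have hsum : ∑ j, v j ^ 2 = 0 := by
      have h0 : 0 ≤ ∑ j, v j ^ 2 := Finset.sum_nonneg fun _ _ => sq_nonneg _
      have := congrArg (· ^ 2) hv
      simpa [enormR, Real.sq_sqrt h0] using this
    have hv0 : v = 0 := by
      funext j
      have := (Finset.sum_eq_zero_iff_of_nonneg (fun i _ => sq_nonneg (v i))).1 hsum j (Finset.mem_univ j)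
      exact pow_eq_zero_iff (by norm_num) |>.1 this
    simp [hv0, hv, enormR]
  · have hvpos : 0 < enormR v := lt_of_le_of_ne (enormR_nonneg v) (Ne.symm hv)
    set c := (enormR v)⁻¹ with hc
    have hmem : enormR (A.mulVec (c • v)) ∈
        {t : ℝ | ∃ u : Fin N → ℝ, enormR u = 1 ∧ t = enormR (A.mulVec u)} := by
      refine ⟨c • v, ?_, rfl⟩
      rw [enormR_smul, abs_of_pos (inv_pos.2 hvpos), inv_mul_cancel₀ hv]
    have hle := le_csSup (specNormR_bddAbove A) hmem
    have heq : enormR (A.mulVec (c • v)) = c * enormR (A.mulVec v) := by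
      rw [Matrix.mulVec_smul, enormR_smul, abs_of_pos (inv_pos.2 hvpos)]
    rw [heq] at hle
    have hle2 : c * enormR (A.mulVec v) ≤ specNormR A := hle
    calc enormR (A.mulVec v) = (c * enormR (A.mulVec v)) * enormR v := by
          rw [hc]; field_simp
      _ ≤ specNormR A * enormR v := mul_le_mul_of_nonneg_right hle2 hvpos.le


/-- Expander mixing lemma for irregular graphs: for every edge-weighted undirected
graph `G = (V, W)` with irreducible weight matrix, `disc_1(G) ≤ ‖M_D‖`, where
`‖M_D‖` is the spectral norm of the normalized modularity matrix. -/
theorem expander_mixing_irregular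
    (W : Matrix (Fin n) (Fin n) ℝ)
    (hsymm : W.IsSymm)
    (hnonneg : ∀ i j, 0 ≤ W i j)
    (hdiag : ∀ i, W i i = 0)
    (hdeg : ∀ i, 0 < deg W i)
    (hsum : ∑ i, deg W i = 1)
    (hirr : MatIrreducible W) :
    disc1 W ≤ specNormR (MD W) := by
  have hn : 0 < n := by
    rcases Nat.eq_zero_or_pos n with h | h
    · subst h; simp at hsum
    · exact h
  have hS0 : 0 ≤ specNormR (MD W) := by
    have h1 : enormR (fun j : Fin n => if j = ⟨0, hn⟩ then (1 : ℝ) else 0) = 1 := by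
      have : ∑ j : Fin n, (if j = ⟨0, hn⟩ then (1 : ℝ) else 0) ^ 2 = 1 := by
        simp [apply_ite (· ^ 2)]
      simp [enormR, this]
    have h2 := enormR_mulVec_le (MD W) (fun j : Fin n => if j = ⟨0, hn⟩ then (1 : ℝ) else 0)
    rw [h1, mul_one] at h2
    exact le_trans (enormR_nonneg _) h2
  apply Real.sSup_le _ hS0
  rintro t ⟨X, Y, rfl⟩
  rcases eq_or_ne X ∅ with rfl | hX
  · simpa [cut, vol] using hS0
  rcases eq_or_ne Y ∅ with rfl | hY
  · simpa [cut, vol] using hS0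
  have hvX : 0 < vol W X :=
    Finset.sum_pos (fun i _ => hdeg i) (Finset.nonempty_iff_ne_empty.2 hX)
  have hvY : 0 < vol W Y :=
    Finset.sum_pos (fun i _ => hdeg i) (Finset.nonempty_iff_ne_empty.2 hY)
  set x : Fin n → ℝ := fun i => if i ∈ X then Real.sqrt (deg W i) else 0 with hx
  set y : Fin n → ℝ := fun j => if j ∈ Y then Real.sqrt (deg W j) else 0 with hy
  have hxn : enormR x = Real.sqrt (vol W X) := by
    have h : ∀ i, x i ^ 2 = if i ∈ X then deg W i else 0 := by
      intro i; by_cases h : i ∈ X <;> simp [hx, h, Real.sq_sqrt (hdeg i).le]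
    unfold enormR vol
    simp_rw [h]
    rw [Finset.sum_ite_mem, Finset.univ_inter]
  have hyn : enormR y = Real.sqrt (vol W Y) := by
    have h : ∀ j, y j ^ 2 = if j ∈ Y then deg W j else 0 := by
      intro j; by_cases h : j ∈ Y <;> simp [hy, h, Real.sq_sqrt (hdeg j).le]
    unfold enormR vol
    simp_rw [h]
    rw [Finset.sum_ite_mem, Finset.univ_inter]
  have hMD : ∀ i j, MD W i j =
      (Real.sqrt (deg W i))⁻¹ * ((W i j - deg W i * deg W j) * (Real.sqrt (deg W j))⁻¹) := by
    intro i j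
    simp [MD, Matrix.mul_diagonal, Matrix.diagonal_mul, Matrix.sub_apply]
    ring
  have hkey : ∑ i, x i * ((MD W).mulVec y) i = cut W X Y - vol W X * vol W Y := by
    have step1 : ∑ i, x i * ((MD W).mulVec y) i
        = ∑ i ∈ X, ∑ j ∈ Y, (W i j - deg W i * deg W j) := by
      simp only [Matrix.mulVec, dotProduct]
      have hterm : ∀ i, x i * (∑ j, MD W i j * y j)
          = if i ∈ X then ∑ j ∈ Y, (W i j - deg W i * deg W j) else 0 := by
        intro i
        have hinner : ∑ j, MD W i j * y j
            = ∑ j ∈ Y, MD W i j * Real.sqrt (deg W j) := by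
          simp_rw [hy, mul_ite, mul_zero]
          rw [Finset.sum_ite_mem, Finset.univ_inter]
        rw [hinner, hx]
        by_cases h : i ∈ X
        · simp only [h, if_true]
          rw [Finset.mul_sum]
          apply Finset.sum_congr rfl
          intro j _
          rw [hMD]
          have hsi : Real.sqrt (deg W i) ≠ 0 := Real.sqrt_ne_zero'.2 (hdeg i)
          have hsj : Real.sqrt (deg W j) ≠ 0 := Real.sqrt_ne_zero'.2 (hdeg j)
          field_simp
        · simp [h]
      simp_rw [hterm]
      rw [Finset.sum_ite_mem, Finset.univ_inter]
    rw [step1]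
    rw [Finset.sum_congr rfl (fun i _ => Finset.sum_sub_distrib (fun j => W i j) (fun j => deg W i * deg W j)), Finset.sum_sub_distrib]
    unfold cut vol
    congr 1
    rw [Finset.sum_mul_sum]
  have hbound : |cut W X Y - vol W X * vol W Y|
      ≤ Real.sqrt (vol W X) * (specNormR (MD W) * Real.sqrt (vol W Y)) := by
    rw [← hkey]
    calc |∑ i, x i * ((MD W).mulVec y) i|
        ≤ enormR x * enormR ((MD W).mulVec y) := abs_sum_mul_le _ _
      _ ≤ enormR x * (specNormR (MD W) * enormR y) :=
          mul_le_mul_of_nonneg_left (enormR_mulVec_le _ _) (enormR_nonneg _)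
      _ = Real.sqrt (vol W X) * (specNormR (MD W) * Real.sqrt (vol W Y)) := by
          rw [hxn, hyn]
  have hsq : 0 < Real.sqrt (vol W X * vol W Y) :=
    Real.sqrt_pos.2 (mul_pos hvX hvY)
  rw [div_le_iff₀ hsq, Real.sqrt_mul hvX.le]
  calc |cut W X Y - vol W X * vol W Y|
      ≤ Real.sqrt (vol W X) * (specNormR (MD W) * Real.sqrt (vol W Y)) := hbound
    _ = specNormR (MD W) * (Real.sqrt (vol W X) * Real.sqrt (vol W Y)) := by ring


end Stmt6
end

section
/- Let C be an m×n nonnegative matrix with entries summing to 1, R_1,…,R_k and C_1,…,C_k proper k-partitions of its rows and columns with discrepancy α = disc(C; R_1,…,R_k, C_1,…,C_k), and F = C − D_row R D_col the associated deviation matrix. Let ω, ω′ be complex numbers of modulus 1, and let x = Σ_{a=1}^k (1_{X_{a1}} + ω·1_{X_{a2}}) ∈ ℂᵐ where, for each a, X_{a1} and X_{a2} are disjoint subsets of R_a; similarly let y = Σ_{b=1}^k (1_{Y_{b1}} + ω′·1_{Y_{b2}}) ∈ ℂⁿ with Y_{b1}, Y_{b2} disjoint subsets of C_b. Then |⟨x,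 F y⟩| ≤ 2kα·√(⟨|x|, C 1_n⟩ · ⟨1_m, C |y|⟩), where |z| denotes the real vector of absolute values of the coordinates of z. -/
open scoped BigOperators

namespace Stmt8

variable {m n : ℕ}

/-- Row sums `d_{row,i}` of the table `C`. -/
noncomputable def rowSum (C : Matrix (Fin m) (Fin n) ℝ) (i : Fin m) : ℝ := ∑ j, C i j

/-- Column sums `d_{col,j}` of the table `C`. -/
noncomputable def colSum (C : Matrix (Fin m) (Fin n) ℝ) (j : Fin n) : ℝ := ∑ i, C i j

/-- The cut `c(X,Y)`. -/
noncomputable def cut (C : Matrix (Fin m) (Fin n) ℝ) (X : Finset (Fin m))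
    (Y : Finset (Fin n)) : ℝ := ∑ i ∈ X, ∑ j ∈ Y, C i j

/-- The volume of a row-subset. -/
noncomputable def volRow (C : Matrix (Fin m) (Fin n) ℝ) (X : Finset (Fin m)) : ℝ :=
  ∑ i ∈ X, rowSum C i

/-- The volume of a column-subset. -/
noncomputable def volCol (C : Matrix (Fin m) (Fin n) ℝ) (Y : Finset (Fin n)) : ℝ :=
  ∑ j ∈ Y, colSum C j

/-- The relative density `ρ(R_a, C_b)`. -/
noncomputable def rho (C : Matrix (Fin m) (Fin n) ℝ) (RA : Finset (Fin m))
    (CB : Finset (Fin n)) : ℝ :=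
  cut C RA CB / (volRow C RA * volCol C CB)

/-- A proper `k`-partition. -/
def IsProperPartition {N k : ℕ} (P : Fin k → Finset (Fin N)) : Prop :=
  (∀ a, (P a).Nonempty) ∧ (∀ a b, a ≠ b → Disjoint (P a) (P b)) ∧ (∀ i, ∃ a, i ∈ P a)

/-- The discrepancy of `C` in the given proper `k`-partitions. -/
noncomputable def discPart {k : ℕ} (C : Matrix (Fin m) (Fin n) ℝ)
    (R : Fin k → Finset (Fin m)) (Cc : Fin k → Finset (Fin n)) : ℝ :=
  sSup {t : ℝ | ∃ (a b : Fin k) (X : Finset (Fin m)) (Y : Finset (Fin n)),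
    X ⊆ R a ∧ Y ⊆ Cc b ∧
    t = |cut C X Y - rho C (R a) (Cc b) * volRow C X * volCol C Y| /
        Real.sqrt (volRow C X * volCol C Y)}

/-- The block matrix `R` whose entries over the block `R_a × C_b` all equal
`ρ(R_a, C_b)`. -/
noncomputable def Rblk {k : ℕ} (C : Matrix (Fin m) (Fin n) ℝ)
    (R : Fin k → Finset (Fin m)) (Cc : Fin k → Finset (Fin n)) :
    Matrix (Fin m) (Fin n) ℝ :=
  Matrix.of fun i j => ∑ a, ∑ b,
    if i ∈ R a ∧ j ∈ Cc b then rho C (R a) (Cc b) else 0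

/-- The deviation matrix `F = C - D_row R D_col`. -/
noncomputable def Fmat {k : ℕ} (C : Matrix (Fin m) (Fin n) ℝ)
    (R : Fin k → Finset (Fin m)) (Cc : Fin k → Finset (Fin n)) :
    Matrix (Fin m) (Fin n) ℝ :=
  C - Matrix.diagonal (rowSum C) * Rblk C R Cc * Matrix.diagonal (colSum C)

/-- The complex inner product `⟨x, y⟩ = ∑ conj(x_i) y_i`. -/
noncomputable def cinner {N : ℕ} (x y : Fin N → ℂ) : ℂ :=
  ∑ i, (starRingEnd ℂ) (x i) * y i

/-- The 0-1 indicator vector (as a complex vector) of an index set. -/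
noncomputable def indC {N : ℕ} (X : Finset (Fin N)) : Fin N → ℂ :=
  fun i => if i ∈ X then 1 else 0



section Aux
variable {k : ℕ} (C : Matrix (Fin m) (Fin n) ℝ)

lemma cut_nonneg (hnn : ∀ i j, 0 ≤ C i j) (X : Finset (Fin m)) (Y : Finset (Fin n)) :
    0 ≤ cut C X Y :=
  Finset.sum_nonneg fun i _ => Finset.sum_nonneg fun j _ => hnn i j

lemma volRow_nonneg (hrow : ∀ i, 0 < rowSum C i) (X : Finset (Fin m)) : 0 ≤ volRow C X :=
  Finset.sum_nonneg fun i _ => (hrow i).le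

lemma volCol_nonneg (hcol : ∀ j, 0 < colSum C j) (Y : Finset (Fin n)) : 0 ≤ volCol C Y :=
  Finset.sum_nonneg fun j _ => (hcol j).le

lemma volRow_mono (hrow : ∀ i, 0 < rowSum C i) {X X' : Finset (Fin m)} (h : X ⊆ X') :
    volRow C X ≤ volRow C X' :=
  Finset.sum_le_sum_of_subset_of_nonneg h (fun i _ _ => (hrow i).le)

lemma volCol_mono (hcol : ∀ j, 0 < colSum C j) {Y Y' : Finset (Fin n)} (h : Y ⊆ Y') :
    volCol C Y ≤ volCol C Y' :=
  Finset.sum_le_sum_of_subset_of_nonneg h (fun j _ _ => (hcol j).le)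

lemma cut_le_volRow (hnn : ∀ i j, 0 ≤ C i j) (X : Finset (Fin m)) (Y : Finset (Fin n)) :
    cut C X Y ≤ volRow C X := by
  refine Finset.sum_le_sum fun i _ => ?_
  exact Finset.sum_le_sum_of_subset_of_nonneg (Finset.subset_univ Y) (fun j _ _ => hnn i j)

lemma cut_le_volCol (hnn : ∀ i j, 0 ≤ C i j) (X : Finset (Fin m)) (Y : Finset (Fin n)) :
    cut C X Y ≤ volCol C Y := by
  rw [show cut C X Y = ∑ j ∈ Y, ∑ i ∈ X, C i j from Finset.sum_comm]
  refine Finset.sum_le_sum fun j _ => ?_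
  exact Finset.sum_le_sum_of_subset_of_nonneg (Finset.subset_univ X) (fun i _ _ => hnn i j)

lemma cut_le_sqrt (hnn : ∀ i j, 0 ≤ C i j) (hrow : ∀ i, 0 < rowSum C i)
    (hcol : ∀ j, 0 < colSum C j) (X : Finset (Fin m)) (Y : Finset (Fin n)) :
    cut C X Y ≤ Real.sqrt (volRow C X * volCol C Y) := by
  have h1 := cut_le_volRow C hnn X Y
  have h2 := cut_le_volCol C hnn X Y
  have h0 := cut_nonneg C hnn X Y
  nlinarith [Real.sq_sqrt (mul_nonneg (volRow_nonneg C hrow X) (volCol_nonneg C hcol Y)),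
    Real.sqrt_nonneg (volRow C X * volCol C Y)]

end Aux

section Aux2
variable {k : ℕ} (C : Matrix (Fin m) (Fin n) ℝ)

lemma rho_nonneg (hnn : ∀ i j, 0 ≤ C i j) (hrow : ∀ i, 0 < rowSum C i)
    (hcol : ∀ j, 0 < colSum C j) (RA : Finset (Fin m)) (CB : Finset (Fin n)) :
    0 ≤ rho C RA CB :=
  div_nonneg (cut_nonneg C hnn RA CB)
    (mul_nonneg (volRow_nonneg C hrow RA) (volCol_nonneg C hcol CB))

lemma volRow_pos (hrow : ∀ i, 0 < rowSum C i) {X : Finset (Fin m)} (hX : X.Nonempty) :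
    0 < volRow C X :=
  Finset.sum_pos (fun i _ => hrow i) hX

lemma volCol_pos (hcol : ∀ j, 0 < colSum C j) {Y : Finset (Fin n)} (hY : Y.Nonempty) :
    0 < volCol C Y :=
  Finset.sum_pos (fun j _ => hcol j) hY

lemma rho_term_le (hnn : ∀ i j, 0 ≤ C i j) (hrow : ∀ i, 0 < rowSum C i)
    (hcol : ∀ j, 0 < colSum C j) {RA : Finset (Fin m)} {CB : Finset (Fin n)}
    (hRA : RA.Nonempty) (hCB : CB.Nonempty) {X : Finset (Fin m)} {Y : Finset (Fin n)}
    (hX : X ⊆ RA) (hY : Y ⊆ CB) :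
    rho C RA CB * volRow C X * volCol C Y ≤ Real.sqrt (volRow C X * volCol C Y) := by
  set VX := volRow C X
  set VY := volCol C Y
  set VR := volRow C RA
  set VC := volCol C CB
  have hVX : 0 ≤ VX := volRow_nonneg C hrow X
  have hVY : 0 ≤ VY := volCol_nonneg C hcol Y
  have hVR : 0 < VR := volRow_pos C hrow hRA
  have hVC : 0 < VC := volCol_pos C hcol hCB
  have hXR : VX ≤ VR := volRow_mono C hrow hX
  have hYC : VY ≤ VC := volCol_mono C hcol hY
  set s := Real.sqrt (VX * VY) with hs
  set S := Real.sqrt (VR * VC) with hS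
  have hs0 : 0 ≤ s := Real.sqrt_nonneg _
  have hS0 : 0 < S := Real.sqrt_pos.2 (mul_pos hVR hVC)
  have hs2 : s ^ 2 = VX * VY := Real.sq_sqrt (mul_nonneg hVX hVY)
  have hS2 : S ^ 2 = VR * VC := Real.sq_sqrt (mul_pos hVR hVC).le
  have hsS : s ≤ S := Real.sqrt_le_sqrt (by nlinarith)
  have hcut : cut C RA CB ≤ S := cut_le_sqrt C hnn hrow hcol RA CB
  rw [rho, div_mul_eq_mul_div, div_mul_eq_mul_div, div_le_iff₀ (by positivity)]
  nlinarith [mul_nonneg hVX hVY, mul_nonneg hs0 hS0.le]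

lemma disc_bddAbove (hnn : ∀ i j, 0 ≤ C i j) (hrow : ∀ i, 0 < rowSum C i)
    (hcol : ∀ j, 0 < colSum C j) (R : Fin k → Finset (Fin m)) (Cc : Fin k → Finset (Fin n))
    (hR : IsProperPartition R) (hCc : IsProperPartition Cc) :
    BddAbove {t : ℝ | ∃ (a b : Fin k) (X : Finset (Fin m)) (Y : Finset (Fin n)),
      X ⊆ R a ∧ Y ⊆ Cc b ∧
      t = |cut C X Y - rho C (R a) (Cc b) * volRow C X * volCol C Y| /
          Real.sqrt (volRow C X * volCol C Y)} := by
  refine ⟨2, fun t ht => ?_⟩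
  obtain ⟨a, b, X, Y, hX, hY, rfl⟩ := ht
  set s := Real.sqrt (volRow C X * volCol C Y) with hs
  rcases eq_or_lt_of_le (Real.sqrt_nonneg (volRow C X * volCol C Y)) with h0 | h0
  · rw [hs, ← h0, div_zero]; norm_num
  · rw [div_le_iff₀ h0]
    have hρ : 0 ≤ rho C (R a) (Cc b) * volRow C X * volCol C Y := by
      have := rho_nonneg C hnn hrow hcol (R a) (Cc b)
      have := volRow_nonneg C hrow X
      have := volCol_nonneg C hcol Y
      positivity
    have hc := cut_nonneg C hnn X Y
    have h1 : |cut C X Y - rho C (R a) (Cc b) * volRow C X * volCol C Y| ≤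
        cut C X Y + rho C (R a) (Cc b) * volRow C X * volCol C Y :=
      abs_sub_le_iff.mpr ⟨by linarith, by linarith⟩
    have h2 := cut_le_sqrt C hnn hrow hcol X Y
    have h3 := rho_term_le C hnn hrow hcol (hR.1 a) (hCc.1 b) hX hY
    rw [← hs] at h2 h3
    linarith

theorem key_disc_bound (hnn : ∀ i j, 0 ≤ C i j) (hrow : ∀ i, 0 < rowSum C i)
    (hcol : ∀ j, 0 < colSum C j) (R : Fin k → Finset (Fin m)) (Cc : Fin k → Finset (Fin n))
    (hR : IsProperPartition R) (hCc : IsProperPartition Cc)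
    (a b : Fin k) {X : Finset (Fin m)} {Y : Finset (Fin n)} (hX : X ⊆ R a) (hY : Y ⊆ Cc b) :
    |cut C X Y - rho C (R a) (Cc b) * volRow C X * volCol C Y| ≤
      discPart C R Cc * (Real.sqrt (volRow C X) * Real.sqrt (volCol C Y)) := by
  have hmem : |cut C X Y - rho C (R a) (Cc b) * volRow C X * volCol C Y| /
      Real.sqrt (volRow C X * volCol C Y) ∈ {t : ℝ | ∃ (a b : Fin k) (X : Finset (Fin m))
      (Y : Finset (Fin n)), X ⊆ R a ∧ Y ⊆ Cc b ∧
      t = |cut C X Y - rho C (R a) (Cc b) * volRow C X * volCol C Y| /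
          Real.sqrt (volRow C X * volCol C Y)} := ⟨a, b, X, Y, hX, hY, rfl⟩
  have hle : |cut C X Y - rho C (R a) (Cc b) * volRow C X * volCol C Y| /
      Real.sqrt (volRow C X * volCol C Y) ≤ discPart C R Cc :=
    le_csSup (disc_bddAbove C hnn hrow hcol R Cc hR hCc) hmem
  rcases eq_or_lt_of_le (Real.sqrt_nonneg (volRow C X * volCol C Y)) with h0 | h0
  · -- sqrt = 0 : then X or Y is empty, LHS = 0
    have hprod : volRow C X * volCol C Y = 0 := by
      have h1 := Real.sqrt_eq_zero'.mp h0.symm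
      exact le_antisymm h1 (mul_nonneg (volRow_nonneg C hrow X) (volCol_nonneg C hcol Y))
    rcases mul_eq_zero.mp hprod with h | h
    · have hXe : X = ∅ := by
        by_contra hne
        exact absurd h (ne_of_gt (volRow_pos C hrow (Finset.nonempty_iff_ne_empty.2 hne)))
      subst hXe
      simp [cut, volRow]
    · have hYe : Y = ∅ := by
        by_contra hne
        exact absurd h (ne_of_gt (volCol_pos C hcol (Finset.nonempty_iff_ne_empty.2 hne)))
      subst hYe
      simp [cut, volCol]
  · rw [← Real.sqrt_mul (volRow_nonneg C hrow X)]
    calc |cut C X Y - rho C (R a) (Cc b) * volRow C X * volCol C Y|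
        = (|cut C X Y - rho C (R a) (Cc b) * volRow C X * volCol C Y| /
          Real.sqrt (volRow C X * volCol C Y)) * Real.sqrt (volRow C X * volCol C Y) := by
          field_simp
      _ ≤ discPart C R Cc * Real.sqrt (volRow C X * volCol C Y) :=
          mul_le_mul_of_nonneg_right hle h0.le

end Aux2

section Aux3
variable {k : ℕ} (C : Matrix (Fin m) (Fin n) ℝ)

lemma Rblk_apply (R : Fin k → Finset (Fin m)) (Cc : Fin k → Finset (Fin n))
    (hR : IsProperPartition R) (hCc : IsProperPartition Cc)
    {a b : Fin k} {i : Fin m} {j : Fin n} (hi : i ∈ R a) (hj : j ∈ Cc b) :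
    Rblk C R Cc i j = rho C (R a) (Cc b) := by
  have hiu : ∀ a', a' ≠ a → i ∉ R a' := fun a' ha' hmem =>
    (Finset.disjoint_left.mp (hR.2.1 a' a ha') hmem) hi
  have hju : ∀ b', b' ≠ b → j ∉ Cc b' := fun b' hb' hmem =>
    (Finset.disjoint_left.mp (hCc.2.1 b' b hb') hmem) hj
  show (∑ a', ∑ b', if i ∈ R a' ∧ j ∈ Cc b' then rho C (R a') (Cc b') else 0) = _
  rw [Finset.sum_eq_single a]
  · rw [Finset.sum_eq_single b]
    · simp [hi, hj]
    · intro b' _ hb'; simp [hju b' hb']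
    · intro h; exact absurd (Finset.mem_univ b) h
  · intro a' _ ha'; exact Finset.sum_eq_zero fun b' _ => by simp [hiu a' ha']
  · intro h; exact absurd (Finset.mem_univ a) h

lemma Fmat_block_sum (R : Fin k → Finset (Fin m)) (Cc : Fin k → Finset (Fin n))
    (hR : IsProperPartition R) (hCc : IsProperPartition Cc)
    {a b : Fin k} {X : Finset (Fin m)} {Y : Finset (Fin n)}
    (hX : X ⊆ R a) (hY : Y ⊆ Cc b) :
    ∑ i ∈ X, ∑ j ∈ Y, Fmat C R Cc i j =
      cut C X Y - rho C (R a) (Cc b) * volRow C X * volCol C Y := by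
  have hentry : ∀ i ∈ X, ∀ j ∈ Y, Fmat C R Cc i j =
      C i j - rowSum C i * rho C (R a) (Cc b) * colSum C j := by
    intro i hi j hj
    simp only [Fmat, Matrix.sub_apply, Matrix.mul_diagonal, Matrix.diagonal_mul]
    rw [Rblk_apply C R Cc hR hCc (hX hi) (hY hj)]
  rw [Finset.sum_congr rfl (fun i hi => Finset.sum_congr rfl (fun j hj => hentry i hi j hj))]
  rw [show cut C X Y = ∑ i ∈ X, ∑ j ∈ Y, C i j from rfl, volRow, volCol]
  simp only [Finset.sum_sub_distrib]
  congr 1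
  have h1 : ∀ i, ∑ j ∈ Y, rowSum C i * rho C (R a) (Cc b) * colSum C j
      = rowSum C i * rho C (R a) (Cc b) * ∑ j ∈ Y, colSum C j := fun i =>
    (Finset.mul_sum _ _ _).symm
  rw [Finset.sum_congr rfl (fun i _ => h1 i), ← Finset.sum_mul, ← Finset.sum_mul]
  ring

lemma disc_nonneg (hnn : ∀ i j, 0 ≤ C i j) (hrow : ∀ i, 0 < rowSum C i)
    (hcol : ∀ j, 0 < colSum C j) (R : Fin k → Finset (Fin m)) (Cc : Fin k → Finset (Fin n))
    (hR : IsProperPartition R) (hCc : IsProperPartition Cc) (hk : 0 < k) :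
    0 ≤ discPart C R Cc := by
  have hmem : (0 : ℝ) ∈ {t : ℝ | ∃ (a b : Fin k) (X : Finset (Fin m)) (Y : Finset (Fin n)),
      X ⊆ R a ∧ Y ⊆ Cc b ∧
      t = |cut C X Y - rho C (R a) (Cc b) * volRow C X * volCol C Y| /
          Real.sqrt (volRow C X * volCol C Y)} := by
    refine ⟨⟨0, hk⟩, ⟨0, hk⟩, ∅, ∅, Finset.empty_subset _, Finset.empty_subset _, ?_⟩
    simp [cut, volRow, volCol]
  exact le_csSup (disc_bddAbove C hnn hrow hcol R Cc hR hCc) hmem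

end Aux3

section Aux4
variable {k : ℕ}

lemma conj_indC {N : ℕ} (X : Finset (Fin N)) (i : Fin N) :
    (starRingEnd ℂ) (indC X i) = indC X i := by
  simp [indC, apply_ite]

lemma collapse (M : Matrix (Fin m) (Fin n) ℝ) (X : Finset (Fin m)) (Y : Finset (Fin n)) :
    ∑ i, ∑ j, indC X i * (M i j : ℂ) * indC Y j = ((∑ i ∈ X, ∑ j ∈ Y, M i j : ℝ) : ℂ) := by
  push_cast
  simp [indC, ite_mul, mul_ite, mul_zero, zero_mul, one_mul, mul_one, Finset.sum_ite_mem,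
    Finset.univ_inter]

lemma sum_swap4 {α β γ δ : Type*} [Fintype α] [Fintype β] [Fintype γ] [Fintype δ]
    {A : Type*} [AddCommMonoid A] (f : α → β → γ → δ → A) :
    ∑ i, ∑ j, ∑ b, ∑ a, f i j b a = ∑ a, ∑ b, ∑ i, ∑ j, f i j b a := by
  calc ∑ i, ∑ j, ∑ b, ∑ a, f i j b a
      = ∑ i, ∑ j, ∑ a, ∑ b, f i j b a :=
        Finset.sum_congr rfl fun i _ => Finset.sum_congr rfl fun j _ => Finset.sum_comm
    _ = ∑ i, ∑ a, ∑ j, ∑ b, f i j b a :=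
        Finset.sum_congr rfl fun i _ => Finset.sum_comm
    _ = ∑ a, ∑ i, ∑ j, ∑ b, f i j b a := Finset.sum_comm
    _ = ∑ a, ∑ i, ∑ b, ∑ j, f i j b a :=
        Finset.sum_congr rfl fun a _ => Finset.sum_congr rfl fun i _ => Finset.sum_comm
    _ = ∑ a, ∑ b, ∑ i, ∑ j, f i j b a :=
        Finset.sum_congr rfl fun a _ => Finset.sum_comm

lemma expand (M : Matrix (Fin m) (Fin n) ℝ) (ω ω' : ℂ)
    (X1 X2 : Fin k → Finset (Fin m)) (Y1 Y2 : Fin k → Finset (Fin n)) :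
    cinner (fun i => ∑ a, (indC (X1 a) i + ω * indC (X2 a) i))
      ((M.map (fun r => (r : ℂ))).mulVec (fun j => ∑ b, (indC (Y1 b) j + ω' * indC (Y2 b) j)))
    = ∑ a, ∑ b,
      ( ((∑ i ∈ X1 a, ∑ j ∈ Y1 b, M i j : ℝ) : ℂ)
      + ω' * ((∑ i ∈ X1 a, ∑ j ∈ Y2 b, M i j : ℝ) : ℂ)
      + (starRingEnd ℂ) ω * ((∑ i ∈ X2 a, ∑ j ∈ Y1 b, M i j : ℝ) : ℂ)
      + (starRingEnd ℂ) ω * ω' * ((∑ i ∈ X2 a, ∑ j ∈ Y2 b, M i j : ℝ) : ℂ) ) := by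
  simp only [cinner, Matrix.mulVec, dotProduct, Matrix.map_apply,
    map_sum, map_add, map_mul, conj_indC]
  simp only [Finset.sum_mul, Finset.mul_sum]
  rw [sum_swap4 (fun (i : Fin m) (j : Fin n) (b : Fin k) (a : Fin k) =>
    (indC (X1 a) i + (starRingEnd ℂ) ω * indC (X2 a) i) *
      ((M i j : ℂ) * (indC (Y1 b) j + ω' * indC (Y2 b) j)))]
  refine Finset.sum_congr rfl fun a _ => Finset.sum_congr rfl fun b _ => ?_
  have e : ∀ (i : Fin m) (j : Fin n),
      (indC (X1 a) i + (starRingEnd ℂ) ω * indC (X2 a) i) *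
        ((M i j : ℂ) * (indC (Y1 b) j + ω' * indC (Y2 b) j))
      = indC (X1 a) i * (M i j : ℂ) * indC (Y1 b) j
      + ω' * (indC (X1 a) i * (M i j : ℂ) * indC (Y2 b) j)
      + (starRingEnd ℂ) ω * (indC (X2 a) i * (M i j : ℂ) * indC (Y1 b) j)
      + (starRingEnd ℂ) ω * ω' * (indC (X2 a) i * (M i j : ℂ) * indC (Y2 b) j) :=
    fun i j => by ring
  calc ∑ i, ∑ j, (indC (X1 a) i + (starRingEnd ℂ) ω * indC (X2 a) i) *
        ((M i j : ℂ) * (indC (Y1 b) j + ω' * indC (Y2 b) j))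
      = ∑ i, ∑ j, (indC (X1 a) i * (M i j : ℂ) * indC (Y1 b) j
      + ω' * (indC (X1 a) i * (M i j : ℂ) * indC (Y2 b) j)
      + (starRingEnd ℂ) ω * (indC (X2 a) i * (M i j : ℂ) * indC (Y1 b) j)
      + (starRingEnd ℂ) ω * ω' * (indC (X2 a) i * (M i j : ℂ) * indC (Y2 b) j)) := by
        exact Finset.sum_congr rfl fun i _ => Finset.sum_congr rfl fun j _ => e i j
    _ = _ := by
        simp only [Finset.sum_add_distrib, ← Finset.mul_sum, collapse]

end Aux4

section Aux5

lemma abs_comb {N k : ℕ} (P : Fin k → Finset (Fin N)) (hP : IsProperPartition P)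
    (X1 X2 : Fin k → Finset (Fin N)) (h1 : ∀ a, X1 a ⊆ P a) (h2 : ∀ a, X2 a ⊆ P a)
    (h12 : ∀ a, Disjoint (X1 a) (X2 a)) (ω : ℂ) (hω : ‖ω‖ = 1) (i : Fin N) :
    ‖∑ a, (indC (X1 a) i + ω * indC (X2 a) i)‖
      = ∑ a, ((if i ∈ X1 a then (1 : ℝ) else 0) + (if i ∈ X2 a then 1 else 0)) := by
  obtain ⟨a₀, ha₀⟩ := hP.2.2 i
  have hnot : ∀ a, a ≠ a₀ → i ∉ P a := fun a ha hmem =>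
    (Finset.disjoint_left.mp (hP.2.1 a a₀ ha) hmem) ha₀
  have hside : ∀ (a : Fin k), a ∈ Finset.univ → a ≠ a₀ →
      (indC (X1 a) i + ω * indC (X2 a) i) = 0 := by
    intro a _ ha
    have hn1 : i ∉ X1 a := fun h => hnot a ha (h1 a h)
    have hn2 : i ∉ X2 a := fun h => hnot a ha (h2 a h)
    simp [indC, hn1, hn2]
  have hside' : ∀ (a : Fin k), a ∈ Finset.univ → a ≠ a₀ →
      ((if i ∈ X1 a then (1 : ℝ) else 0) + (if i ∈ X2 a then 1 else 0)) = 0 := by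
    intro a _ ha
    have hn1 : i ∉ X1 a := fun h => hnot a ha (h1 a h)
    have hn2 : i ∉ X2 a := fun h => hnot a ha (h2 a h)
    simp [hn1, hn2]
  rw [Finset.sum_eq_single a₀ hside (fun h => absurd (Finset.mem_univ a₀) h),
    Finset.sum_eq_single a₀ hside' (fun h => absurd (Finset.mem_univ a₀) h)]
  by_cases hi1 : i ∈ X1 a₀ <;> by_cases hi2 : i ∈ X2 a₀
  · exact absurd hi2 (Finset.disjoint_left.mp (h12 a₀) hi1)
  · simp [indC, hi1, hi2]
  · simp [indC, hi1, hi2, hω]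
  · simp [indC, hi1, hi2]

lemma weighted_abs_sum {N k : ℕ} (P : Fin k → Finset (Fin N)) (hP : IsProperPartition P)
    (X1 X2 : Fin k → Finset (Fin N)) (h1 : ∀ a, X1 a ⊆ P a) (h2 : ∀ a, X2 a ⊆ P a)
    (h12 : ∀ a, Disjoint (X1 a) (X2 a)) (ω : ℂ) (hω : ‖ω‖ = 1)
    (d : Fin N → ℝ) :
    ∑ i, ‖∑ a, (indC (X1 a) i + ω * indC (X2 a) i)‖ * d i
      = ∑ a, ((∑ i ∈ X1 a, d i) + (∑ i ∈ X2 a, d i)) := by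
  simp only [abs_comb P hP X1 X2 h1 h2 h12 ω hω]
  simp only [Finset.sum_mul]
  rw [Finset.sum_comm]
  refine Finset.sum_congr rfl fun a _ => ?_
  simp [add_mul, Finset.sum_add_distrib, ite_mul, one_mul, zero_mul, Finset.sum_ite_mem,
    Finset.univ_inter]

end Aux5

section Aux6

lemma sum_sqrt_le {k : ℕ} (p q : Fin k → ℝ) (hp : ∀ a, 0 ≤ p a) (hq : ∀ a, 0 ≤ q a) :
    ∑ a, (Real.sqrt (p a) + Real.sqrt (q a)) ≤
      Real.sqrt ((2 * k) * ∑ a, (p a + q a)) := by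
  have hnn : 0 ≤ ∑ a, (Real.sqrt (p a) + Real.sqrt (q a)) :=
    Finset.sum_nonneg fun a _ => by positivity
  rw [← Real.sqrt_sq hnn]
  apply Real.sqrt_le_sqrt
  have h1 : (∑ a, (Real.sqrt (p a) + Real.sqrt (q a))) ^ 2 ≤
      (Finset.univ : Finset (Fin k)).card * ∑ a, (Real.sqrt (p a) + Real.sqrt (q a)) ^ 2 :=
    sq_sum_le_card_mul_sum_sq
  have h2 : ∀ a, (Real.sqrt (p a) + Real.sqrt (q a)) ^ 2 ≤ 2 * (p a + q a) := by
    intro a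
    nlinarith [Real.sq_sqrt (hp a), Real.sq_sqrt (hq a), sq_nonneg (Real.sqrt (p a) - Real.sqrt (q a)),
      Real.sqrt_nonneg (p a), Real.sqrt_nonneg (q a)]
  calc (∑ a, (Real.sqrt (p a) + Real.sqrt (q a))) ^ 2
      ≤ (Finset.univ : Finset (Fin k)).card * ∑ a, (Real.sqrt (p a) + Real.sqrt (q a)) ^ 2 := h1
    _ ≤ k * ∑ a, 2 * (p a + q a) := by
        rw [Finset.card_univ, Fintype.card_fin]
        exact mul_le_mul_of_nonneg_left (Finset.sum_le_sum fun a _ => h2 a) (by positivity)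
    _ = (2 * k) * ∑ a, (p a + q a) := by rw [← Finset.mul_sum]; ring

end Aux6

/-- The key estimate (7) of the proof of the main theorem: with
`α = disc(C; R_1,…,R_k, C_1,…,C_k)`, `F = C - D_row R D_col`, unimodular `ω, ω'`,
`x = ∑_a (1_{X_{a1}} + ω 1_{X_{a2}})` and `y = ∑_b (1_{Y_{b1}} + ω' 1_{Y_{b2}})`
(with `X_{a1}, X_{a2}` disjoint subsets of `R_a` and `Y_{b1}, Y_{b2}` disjoint
subsets of `C_b`), one has
`|⟨x, F y⟩| ≤ 2kα √(⟨|x|, C 1_n⟩ ⟨1_m, C |y|⟩)`. -/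
theorem inner_F_bound {k : ℕ}
    (C : Matrix (Fin m) (Fin n) ℝ)
    (hnonneg : ∀ i j, 0 ≤ C i j)
    (hsum : ∑ i, ∑ j, C i j = 1)
    (hrow : ∀ i, 0 < rowSum C i)
    (hcol : ∀ j, 0 < colSum C j)
    (R : Fin k → Finset (Fin m)) (Cc : Fin k → Finset (Fin n))
    (hR : IsProperPartition R) (hCc : IsProperPartition Cc)
    (α : ℝ) (hα : α = discPart C R Cc)
    (ω ω' : ℂ) (hω : ‖ω‖ = 1) (hω' : ‖ω'‖ = 1)
    (X1 X2 : Fin k → Finset (Fin m)) (Y1 Y2 : Fin k → Finset (Fin n))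
    (hX1 : ∀ a, X1 a ⊆ R a) (hX2 : ∀ a, X2 a ⊆ R a)
    (hX12 : ∀ a, Disjoint (X1 a) (X2 a))
    (hY1 : ∀ b, Y1 b ⊆ Cc b) (hY2 : ∀ b, Y2 b ⊆ Cc b)
    (hY12 : ∀ b, Disjoint (Y1 b) (Y2 b))
    (x : Fin m → ℂ) (hx : x = fun i => ∑ a, (indC (X1 a) i + ω * indC (X2 a) i))
    (y : Fin n → ℂ) (hy : y = fun j => ∑ b, (indC (Y1 b) j + ω' * indC (Y2 b) j)) :
    ‖cinner x (((Fmat C R Cc).map (fun r => (r : ℂ))).mulVec y)‖ ≤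
      2 * k * α * Real.sqrt ((∑ i, ‖x i‖ * rowSum C i) *
        (∑ j, colSum C j * ‖y j‖)) := by
  subst hx hy
  rcases Nat.eq_zero_or_pos k with hk | hk
  · subst hk
    simp [cinner]
  · have hαnn : 0 ≤ α := hα ▸ disc_nonneg C hnonneg hrow hcol R Cc hR hCc hk
    have hT : ∀ (a b : Fin k) (X : Finset (Fin m)) (Y : Finset (Fin n)), X ⊆ R a → Y ⊆ Cc b →
        ‖((∑ i ∈ X, ∑ j ∈ Y, Fmat C R Cc i j : ℝ) : ℂ)‖ ≤
          α * (Real.sqrt (volRow C X) * Real.sqrt (volCol C Y)) := by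
      intro a b X Y hX hY
      rw [Complex.norm_real, Real.norm_eq_abs, Fmat_block_sum C R Cc hR hCc hX hY, hα]
      exact key_disc_bound C hnonneg hrow hcol R Cc hR hCc a b hX hY
    rw [expand (Fmat C R Cc) ω ω' X1 X2 Y1 Y2]
    have hSx : (0:ℝ) ≤ ∑ a, (volRow C (X1 a) + volRow C (X2 a)) :=
      Finset.sum_nonneg fun a _ =>
        add_nonneg (volRow_nonneg C hrow _) (volRow_nonneg C hrow _)
    have hSy : (0:ℝ) ≤ ∑ b, (volCol C (Y1 b) + volCol C (Y2 b)) :=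
      Finset.sum_nonneg fun b _ =>
        add_nonneg (volCol_nonneg C hcol _) (volCol_nonneg C hcol _)
    calc ‖∑ a, ∑ b,
        ( ((∑ i ∈ X1 a, ∑ j ∈ Y1 b, Fmat C R Cc i j : ℝ) : ℂ)
        + ω' * ((∑ i ∈ X1 a, ∑ j ∈ Y2 b, Fmat C R Cc i j : ℝ) : ℂ)
        + (starRingEnd ℂ) ω * ((∑ i ∈ X2 a, ∑ j ∈ Y1 b, Fmat C R Cc i j : ℝ) : ℂ)
        + (starRingEnd ℂ) ω * ω' * ((∑ i ∈ X2 a, ∑ j ∈ Y2 b, Fmat C R Cc i j : ℝ) : ℂ))‖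
        ≤ ∑ a, ∑ b, α * ((Real.sqrt (volRow C (X1 a)) + Real.sqrt (volRow C (X2 a))) *
            (Real.sqrt (volCol C (Y1 b)) + Real.sqrt (volCol C (Y2 b)))) := by
          refine (norm_sum_le _ _).trans ?_
          refine Finset.sum_le_sum fun a _ => ?_
          refine (norm_sum_le _ _).trans ?_
          refine Finset.sum_le_sum fun b _ => ?_
          have e1 := hT a b (X1 a) (Y1 b) (hX1 a) (hY1 b)
          have e2 := hT a b (X1 a) (Y2 b) (hX1 a) (hY2 b)
          have e3 := hT a b (X2 a) (Y1 b) (hX2 a) (hY1 b)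
          have e4 := hT a b (X2 a) (Y2 b) (hX2 a) (hY2 b)
          have habs : ‖ ((∑ i ∈ X1 a, ∑ j ∈ Y1 b, Fmat C R Cc i j : ℝ) : ℂ)
              + ω' * ((∑ i ∈ X1 a, ∑ j ∈ Y2 b, Fmat C R Cc i j : ℝ) : ℂ)
              + (starRingEnd ℂ) ω * ((∑ i ∈ X2 a, ∑ j ∈ Y1 b, Fmat C R Cc i j : ℝ) : ℂ)
              + (starRingEnd ℂ) ω * ω' * ((∑ i ∈ X2 a, ∑ j ∈ Y2 b, Fmat C R Cc i j : ℝ) : ℂ)‖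
              ≤ ‖((∑ i ∈ X1 a, ∑ j ∈ Y1 b, Fmat C R Cc i j : ℝ) : ℂ)‖
              + ‖((∑ i ∈ X1 a, ∑ j ∈ Y2 b, Fmat C R Cc i j : ℝ) : ℂ)‖
              + ‖((∑ i ∈ X2 a, ∑ j ∈ Y1 b, Fmat C R Cc i j : ℝ) : ℂ)‖
              + ‖((∑ i ∈ X2 a, ∑ j ∈ Y2 b, Fmat C R Cc i j : ℝ) : ℂ)‖ := by
            refine ((norm_add_le _ _).trans (add_le_add
              ((norm_add_le _ _).trans (add_le_add
                ((norm_add_le _ _).trans (add_le_add le_rfl ?_)) ?_)) ?_))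
            · rw [norm_mul, hω', one_mul]
            · rw [norm_mul, Complex.norm_conj, hω, one_mul]
            · rw [norm_mul, norm_mul, Complex.norm_conj, hω, hω', one_mul, one_mul]
          have hring : α * ((Real.sqrt (volRow C (X1 a)) + Real.sqrt (volRow C (X2 a))) *
              (Real.sqrt (volCol C (Y1 b)) + Real.sqrt (volCol C (Y2 b))))
              = α * (Real.sqrt (volRow C (X1 a)) * Real.sqrt (volCol C (Y1 b)))
              + α * (Real.sqrt (volRow C (X1 a)) * Real.sqrt (volCol C (Y2 b)))
              + α * (Real.sqrt (volRow C (X2 a)) * Real.sqrt (volCol C (Y1 b)))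
              + α * (Real.sqrt (volRow C (X2 a)) * Real.sqrt (volCol C (Y2 b))) := by ring
          rw [hring]
          exact habs.trans (add_le_add (add_le_add (add_le_add e1 e2) e3) e4)
      _ = α * ((∑ a, (Real.sqrt (volRow C (X1 a)) + Real.sqrt (volRow C (X2 a)))) *
            (∑ b, (Real.sqrt (volCol C (Y1 b)) + Real.sqrt (volCol C (Y2 b))))) := by
          rw [Finset.sum_mul_sum, Finset.mul_sum]
          exact Finset.sum_congr rfl fun a _ => by rw [Finset.mul_sum]
      _ ≤ α * (Real.sqrt ((2 * k) * ∑ a, (volRow C (X1 a) + volRow C (X2 a))) *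
            Real.sqrt ((2 * k) * ∑ b, (volCol C (Y1 b) + volCol C (Y2 b)))) := by
          refine mul_le_mul_of_nonneg_left ?_ hαnn
          refine mul_le_mul (sum_sqrt_le _ _ (fun a => volRow_nonneg C hrow _)
              (fun a => volRow_nonneg C hrow _))
            (sum_sqrt_le _ _ (fun b => volCol_nonneg C hcol _)
              (fun b => volCol_nonneg C hcol _))
            (Finset.sum_nonneg fun b _ => by positivity) (Real.sqrt_nonneg _)
      _ = 2 * k * α * Real.sqrt ((∑ a, (volRow C (X1 a) + volRow C (X2 a))) *
            (∑ b, (volCol C (Y1 b) + volCol C (Y2 b)))) := by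
          rw [← Real.sqrt_mul (by positivity)]
          rw [show ((2 * (k:ℝ)) * ∑ a, (volRow C (X1 a) + volRow C (X2 a))) *
              ((2 * (k:ℝ)) * ∑ b, (volCol C (Y1 b) + volCol C (Y2 b)))
              = (2 * (k:ℝ))^2 * ((∑ a, (volRow C (X1 a) + volRow C (X2 a))) *
                (∑ b, (volCol C (Y1 b) + volCol C (Y2 b)))) by ring]
          rw [Real.sqrt_mul (by positivity), Real.sqrt_sq (by positivity)]
          ring
      _ = 2 * k * α * Real.sqrt ((∑ i, ‖∑ a, (indC (X1 a) i + ω * indC (X2 a) i)‖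
            * rowSum C i) *
            (∑ j, colSum C j * ‖∑ b, (indC (Y1 b) j + ω' * indC (Y2 b) j)‖)) := by
          rw [weighted_abs_sum R hR X1 X2 hX1 hX2 hX12 ω hω (rowSum C)]
          rw [show (∑ j, colSum C j * ‖∑ b, (indC (Y1 b) j + ω' * indC (Y2 b) j)‖)
              = ∑ j, ‖∑ b, (indC (Y1 b) j + ω' * indC (Y2 b) j)‖ * colSum C j from
            Finset.sum_congr rfl fun j _ => mul_comm _ _]
          rw [weighted_abs_sum Cc hCc Y1 Y2 hY1 hY2 hY12 ω' hω' (colSum C)]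
          simp only [volRow, volCol]

end Stmt8
end

section
/- Let C be an m×n nonnegative matrix with entries summing to 1, R_1,…,R_k and C_1,…,C_k proper k-partitions of its rows and columns, and F = C − D_row R D_col the associated deviation matrix. Let x ∈ ℂᵐ be any vector and {y^{(ℓ)}} a finite family of vectors in ℂⁿ such that each |y^{(ℓ)}| is a 0-1 vector and the supports of the y^{(ℓ)} are pairwise disjoint. Then Σ_ℓ |⟨x, F y^{(ℓ)}⟩| ≤ 2·⟨|x|, C 1_n⟩, where |z| denotes the real vector of absolute values of the coordinates of z. -/
open scoped BigOperators

namespace Stmt9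

variable {m n : ℕ}

/-- Row sums `d_{row,i}` of the table `C`. -/
noncomputable def rowSum (C : Matrix (Fin m) (Fin n) ℝ) (i : Fin m) : ℝ := ∑ j, C i j

/-- Column sums `d_{col,j}` of the table `C`. -/
noncomputable def colSum (C : Matrix (Fin m) (Fin n) ℝ) (j : Fin n) : ℝ := ∑ i, C i j

/-- The cut `c(X,Y)`. -/
noncomputable def cut (C : Matrix (Fin m) (Fin n) ℝ) (X : Finset (Fin m))
    (Y : Finset (Fin n)) : ℝ := ∑ i ∈ X, ∑ j ∈ Y, C i j

/-- The volume of a row-subset. -/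
noncomputable def volRow (C : Matrix (Fin m) (Fin n) ℝ) (X : Finset (Fin m)) : ℝ :=
  ∑ i ∈ X, rowSum C i

/-- The volume of a column-subset. -/
noncomputable def volCol (C : Matrix (Fin m) (Fin n) ℝ) (Y : Finset (Fin n)) : ℝ :=
  ∑ j ∈ Y, colSum C j

/-- The relative density `ρ(R_a, C_b)`. -/
noncomputable def rho (C : Matrix (Fin m) (Fin n) ℝ) (RA : Finset (Fin m))
    (CB : Finset (Fin n)) : ℝ :=
  cut C RA CB / (volRow C RA * volCol C CB)

/-- A proper `k`-partition. -/
def IsProperPartition {N k : ℕ} (P : Fin k → Finset (Fin N)) : Prop :=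
  (∀ a, (P a).Nonempty) ∧ (∀ a b, a ≠ b → Disjoint (P a) (P b)) ∧ (∀ i, ∃ a, i ∈ P a)

/-- The discrepancy of `C` in the given proper `k`-partitions. -/
noncomputable def discPart {k : ℕ} (C : Matrix (Fin m) (Fin n) ℝ)
    (R : Fin k → Finset (Fin m)) (Cc : Fin k → Finset (Fin n)) : ℝ :=
  sSup {t : ℝ | ∃ (a b : Fin k) (X : Finset (Fin m)) (Y : Finset (Fin n)),
    X ⊆ R a ∧ Y ⊆ Cc b ∧
    t = |cut C X Y - rho C (R a) (Cc b) * volRow C X * volCol C Y| /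
        Real.sqrt (volRow C X * volCol C Y)}

/-- The block matrix `R` whose entries over the block `R_a × C_b` all equal
`ρ(R_a, C_b)`. -/
noncomputable def Rblk {k : ℕ} (C : Matrix (Fin m) (Fin n) ℝ)
    (R : Fin k → Finset (Fin m)) (Cc : Fin k → Finset (Fin n)) :
    Matrix (Fin m) (Fin n) ℝ :=
  Matrix.of fun i j => ∑ a, ∑ b,
    if i ∈ R a ∧ j ∈ Cc b then rho C (R a) (Cc b) else 0

/-- The deviation matrix `F = C - D_row R D_col`. -/
noncomputable def Fmat {k : ℕ} (C : Matrix (Fin m) (Fin n) ℝ)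
    (R : Fin k → Finset (Fin m)) (Cc : Fin k → Finset (Fin n)) :
    Matrix (Fin m) (Fin n) ℝ :=
  C - Matrix.diagonal (rowSum C) * Rblk C R Cc * Matrix.diagonal (colSum C)

/-- The complex inner product `⟨x, y⟩ = ∑ conj(x_i) y_i`. -/
noncomputable def cinner {N : ℕ} (x y : Fin N → ℂ) : ℂ :=
  ∑ i, (starRingEnd ℂ) (x i) * y i

/-- The 0-1 indicator vector (as a complex vector) of an index set. -/
noncomputable def indC {N : ℕ} (X : Finset (Fin N)) : Fin N → ℂ :=
  fun i => if i ∈ X then 1 else 0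

/-- Summing over the blocks of a proper partition equals summing over everything. -/
lemma sum_partition {N k : ℕ} {P : Fin k → Finset (Fin N)} (hP : IsProperPartition P)
    (f : Fin N → ℝ) : ∑ a, ∑ j ∈ P a, f j = ∑ j, f j := by
  rw [← Finset.sum_biUnion (fun a _ b _ hab => hP.2.1 a b hab)]
  congr 1
  ext j
  simp only [Finset.mem_biUnion, Finset.mem_univ, true_and, iff_true]
  exact hP.2.2 j

lemma volRow_pos {C : Matrix (Fin m) (Fin n) ℝ} (hrow : ∀ i, 0 < rowSum C i)
    {X : Finset (Fin m)} (hX : X.Nonempty) : 0 < volRow C X :=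
  Finset.sum_pos (fun i _ => hrow i) hX

lemma volCol_pos {C : Matrix (Fin m) (Fin n) ℝ} (hcol : ∀ j, 0 < colSum C j)
    {Y : Finset (Fin n)} (hY : Y.Nonempty) : 0 < volCol C Y :=
  Finset.sum_pos (fun j _ => hcol j) hY

lemma cut_nonneg {C : Matrix (Fin m) (Fin n) ℝ} (hnonneg : ∀ i j, 0 ≤ C i j)
    (X : Finset (Fin m)) (Y : Finset (Fin n)) : 0 ≤ cut C X Y :=
  Finset.sum_nonneg fun i _ => Finset.sum_nonneg fun j _ => hnonneg i j

lemma rho_nonneg {C : Matrix (Fin m) (Fin n) ℝ} (hnonneg : ∀ i j, 0 ≤ C i j)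
    (hrow : ∀ i, 0 < rowSum C i) (hcol : ∀ j, 0 < colSum C j)
    {X : Finset (Fin m)} {Y : Finset (Fin n)} (hX : X.Nonempty) (hY : Y.Nonempty) :
    0 ≤ rho C X Y :=
  div_nonneg (cut_nonneg hnonneg X Y)
    (le_of_lt (mul_pos (volRow_pos hrow hX) (volCol_pos hcol hY)))

lemma Rblk_nonneg {k : ℕ} {C : Matrix (Fin m) (Fin n) ℝ} (hnonneg : ∀ i j, 0 ≤ C i j)
    (hrow : ∀ i, 0 < rowSum C i) (hcol : ∀ j, 0 < colSum C j)
    {R : Fin k → Finset (Fin m)} {Cc : Fin k → Finset (Fin n)}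
    (hR : IsProperPartition R) (hCc : IsProperPartition Cc) (i : Fin m) (j : Fin n) :
    0 ≤ Rblk C R Cc i j := by
  simp only [Rblk, Matrix.of_apply]
  refine Finset.sum_nonneg fun a _ => Finset.sum_nonneg fun b _ => ?_
  split
  · exact rho_nonneg hnonneg hrow hcol (hR.1 a) (hCc.1 b)
  · exact le_refl 0

/-- The key row-sum identity: `∑_j Rblk_{ij} d_{col,j} = 1`. -/
lemma Rblk_rowsum {k : ℕ} {C : Matrix (Fin m) (Fin n) ℝ}
    (hrow : ∀ i, 0 < rowSum C i) (hcol : ∀ j, 0 < colSum C j)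
    {R : Fin k → Finset (Fin m)} {Cc : Fin k → Finset (Fin n)}
    (hR : IsProperPartition R) (hCc : IsProperPartition Cc) (i : Fin m) :
    ∑ j, Rblk C R Cc i j * colSum C j = 1 := by
  obtain ⟨a0, ha0⟩ := hR.2.2 i
  have hvR : (0:ℝ) < volRow C (R a0) := volRow_pos hrow (hR.1 a0)
  have hstep : ∀ a b, ∑ j, (if i ∈ R a ∧ j ∈ Cc b then rho C (R a) (Cc b) else 0) * colSum C j
      = if i ∈ R a then cut C (R a) (Cc b) / volRow C (R a) else 0 := by
    intro a b
    by_cases hia : i ∈ R a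
    · have hvC : (0:ℝ) < volCol C (Cc b) := volCol_pos hcol (hCc.1 b)
      have hvRa : (0:ℝ) < volRow C (R a) := volRow_pos hrow (hR.1 a)
      simp only [hia, true_and, if_true, ite_mul, zero_mul]
      rw [Finset.sum_ite_mem, Finset.univ_inter, ← Finset.mul_sum]
      show rho C (R a) (Cc b) * volCol C (Cc b) = _
      rw [rho, div_mul_eq_div_div]
      exact div_mul_cancel₀ _ hvC.ne'
    · simp [hia]
  calc ∑ j, Rblk C R Cc i j * colSum C j
      = ∑ a, ∑ b, ∑ j, (if i ∈ R a ∧ j ∈ Cc b then rho C (R a) (Cc b) else 0) * colSum C j := by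
        simp only [Rblk, Matrix.of_apply, Finset.sum_mul]
        rw [Finset.sum_comm]
        exact Finset.sum_congr rfl fun a _ => Finset.sum_comm
    _ = ∑ a, ∑ b, if i ∈ R a then cut C (R a) (Cc b) / volRow C (R a) else 0 := by
        exact Finset.sum_congr rfl fun a _ => Finset.sum_congr rfl fun b _ => hstep a b
    _ = ∑ b, cut C (R a0) (Cc b) / volRow C (R a0) := by
        refine Finset.sum_eq_single_of_mem a0 (Finset.mem_univ a0) (fun a _ ha => ?_) |>.trans ?_
        · have hia : i ∉ R a := fun h =>
            (Finset.disjoint_left.mp (hR.2.1 a a0 ha) h) ha0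
          simp [hia]
        · simp [ha0]
    _ = (∑ b, cut C (R a0) (Cc b)) / volRow C (R a0) := by rw [Finset.sum_div]
    _ = 1 := by
        have : ∑ b, cut C (R a0) (Cc b) = volRow C (R a0) := by
          simp only [cut]
          rw [Finset.sum_comm]
          exact Finset.sum_congr rfl fun i' _ => sum_partition hCc _
        rw [this, div_self hvR.ne']

lemma Fmat_apply {k : ℕ} (C : Matrix (Fin m) (Fin n) ℝ)
    (R : Fin k → Finset (Fin m)) (Cc : Fin k → Finset (Fin n)) (i : Fin m) (j : Fin n) :
    Fmat C R Cc i j = C i j - rowSum C i * Rblk C R Cc i j * colSum C j := by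
  simp [Fmat, Matrix.sub_apply, Matrix.mul_diagonal, Matrix.diagonal_mul]

lemma abs_cinner_le (M : Matrix (Fin m) (Fin n) ℝ) (x : Fin m → ℂ) (v : Fin n → ℂ) :
    ‖cinner x ((M.map (fun r => (r : ℂ))).mulVec v)‖
      ≤ ∑ i, ∑ j, ‖x i‖ * |M i j| * ‖v j‖ := by
  unfold cinner
  refine (norm_sum_le _ _).trans (Finset.sum_le_sum fun i _ => ?_)
  rw [norm_mul, Complex.norm_conj]
  have hin : ‖(M.map (fun r => (r : ℂ))).mulVec v i‖
      ≤ ∑ j, |M i j| * ‖v j‖ := by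
    simp only [Matrix.mulVec, dotProduct, Matrix.map_apply]
    refine (norm_sum_le _ _).trans (Finset.sum_le_sum fun j _ => ?_)
    rw [norm_mul, Complex.norm_real, Real.norm_eq_abs]
  calc ‖x i‖ * ‖(M.map (fun r => (r : ℂ))).mulVec v i‖
      ≤ ‖x i‖ * ∑ j, |M i j| * ‖v j‖ :=
        mul_le_mul_of_nonneg_left hin (norm_nonneg _)
    _ = ∑ j, ‖x i‖ * |M i j| * ‖v j‖ := by
        rw [Finset.mul_sum]; simp [mul_assoc]

/-- Inequality (8) of the proof of the main theorem: for `F = C - D_row R D_col`,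
any `x ∈ ℂᵐ` and any finite family `y^{(ℓ)}` of vectors in `ℂⁿ` such that each
`|y^{(ℓ)}|` is a 0-1 vector and the supports of the `y^{(ℓ)}` are pairwise
disjoint, one has `∑_ℓ |⟨x, F y^{(ℓ)}⟩| ≤ 2 ⟨|x|, C 1_n⟩`. -/
theorem sum_inner_F_bound {k : ℕ} {ι : Type*} [Fintype ι]
    (C : Matrix (Fin m) (Fin n) ℝ)
    (hnonneg : ∀ i j, 0 ≤ C i j)
    (hsum : ∑ i, ∑ j, C i j = 1)
    (hrow : ∀ i, 0 < rowSum C i)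
    (hcol : ∀ j, 0 < colSum C j)
    (R : Fin k → Finset (Fin m)) (Cc : Fin k → Finset (Fin n))
    (hR : IsProperPartition R) (hCc : IsProperPartition Cc)
    (x : Fin m → ℂ) (y : ι → Fin n → ℂ)
    (hy01 : ∀ l j, ‖y l j‖ = 0 ∨ ‖y l j‖ = 1)
    (hdisj : ∀ l l', l ≠ l' → ∀ j, y l j = 0 ∨ y l' j = 0) :
    ∑ l, ‖cinner x (((Fmat C R Cc).map (fun r => (r : ℂ))).mulVec (y l))‖
      ≤ 2 * ∑ i, ‖x i‖ * rowSum C i := by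
  set F := Fmat C R Cc with hFdef
  have hS : ∀ j, ∑ l, ‖y l j‖ ≤ 1 := by
    intro j
    by_cases h : ∃ l, y l j ≠ 0
    · obtain ⟨l0, hl0⟩ := h
      rw [Finset.sum_eq_single_of_mem l0 (Finset.mem_univ l0) (fun l _ hl => ?_)]
      · rcases hy01 l0 j with h | h
        · exact absurd (norm_eq_zero.mp h) hl0
        · rw [h]
      · rcases hdisj l l0 hl j with h | h
        · simp [h]
        · exact absurd h hl0
    · push_neg at h
      simp [h]
  have hFabs : ∀ i j, |F i j| ≤ C i j + rowSum C i * Rblk C R Cc i j * colSum C j := by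
    intro i j
    rw [hFdef, Fmat_apply]
    have h1 : 0 ≤ C i j := hnonneg i j
    have h2 : 0 ≤ rowSum C i * Rblk C R Cc i j * colSum C j :=
      mul_nonneg (mul_nonneg (hrow i).le (Rblk_nonneg hnonneg hrow hcol hR hCc i j))
        (hcol j).le
    rw [abs_le]
    constructor <;> linarith
  have hFrow : ∀ i, ∑ j, |F i j| ≤ 2 * rowSum C i := by
    intro i
    calc ∑ j, |F i j| ≤ ∑ j, (C i j + rowSum C i * Rblk C R Cc i j * colSum C j) :=
          Finset.sum_le_sum fun j _ => hFabs i j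
      _ = rowSum C i + rowSum C i * ∑ j, Rblk C R Cc i j * colSum C j := by
          rw [Finset.sum_add_distrib, Finset.mul_sum]
          simp [rowSum, mul_assoc]
      _ = 2 * rowSum C i := by rw [Rblk_rowsum hrow hcol hR hCc i]; ring
  calc ∑ l, ‖cinner x ((F.map (fun r => (r : ℂ))).mulVec (y l))‖
      ≤ ∑ l, ∑ i, ∑ j, ‖x i‖ * |F i j| * ‖y l j‖ :=
        Finset.sum_le_sum fun l _ => abs_cinner_le F x (y l)
    _ = ∑ i, ∑ j, ‖x i‖ * |F i j| * (∑ l, ‖y l j‖) := by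
        rw [Finset.sum_comm]
        refine Finset.sum_congr rfl fun i _ => ?_
        rw [Finset.sum_comm]
        exact Finset.sum_congr rfl fun j _ => (Finset.mul_sum _ _ _).symm
    _ ≤ ∑ i, ∑ j, ‖x i‖ * |F i j| * 1 := by
        refine Finset.sum_le_sum fun i _ => Finset.sum_le_sum fun j _ => ?_
        exact mul_le_mul_of_nonneg_left (hS j)
          (mul_nonneg (norm_nonneg _) (abs_nonneg _))
    _ = ∑ i, ‖x i‖ * ∑ j, |F i j| := by
        simp [Finset.mul_sum]
    _ ≤ ∑ i, ‖x i‖ * (2 * rowSum C i) :=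
        Finset.sum_le_sum fun i _ =>
          mul_le_mul_of_nonneg_left (hFrow i) (norm_nonneg _)
    _ = 2 * ∑ i, ‖x i‖ * rowSum C i := by
        rw [Finset.mul_sum]
        exact Finset.sum_congr rfl fun i _ => by ring

end Stmt9
end

section
/- For every non-decomposable contingency table C and integer 1 ≤ k ≤ rk(C), if disc_k(C) = 0 then s_k = 0, where s_k is the k-th largest nontrivial singular value of the normalized table C_nor = D_row^{-1/2} C D_col^{-1/2}. -/
open scoped BigOperators Matrix

namespace Stmt14

variable {m n : ℕ}

/-- Row sums `d_{row,i}` of the table `C`. -/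
noncomputable def rowSum (C : Matrix (Fin m) (Fin n) ℝ) (i : Fin m) : ℝ := ∑ j, C i j

/-- Column sums `d_{col,j}` of the table `C`. -/
noncomputable def colSum (C : Matrix (Fin m) (Fin n) ℝ) (j : Fin n) : ℝ := ∑ i, C i j

/-- The cut `c(X,Y)` between a row-subset `X` and a column-subset `Y`. -/
noncomputable def cut (C : Matrix (Fin m) (Fin n) ℝ) (X : Finset (Fin m))
    (Y : Finset (Fin n)) : ℝ := ∑ i ∈ X, ∑ j ∈ Y, C i j

/-- The volume `Vol(X)` of a row-subset. -/
noncomputable def volRow (C : Matrix (Fin m) (Fin n) ℝ) (X : Finset (Fin m)) : ℝ :=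
  ∑ i ∈ X, rowSum C i

/-- The volume `Vol(Y)` of a column-subset. -/
noncomputable def volCol (C : Matrix (Fin m) (Fin n) ℝ) (Y : Finset (Fin n)) : ℝ :=
  ∑ j ∈ Y, colSum C j

/-- The relative density `ρ(R_a, C_b)`. -/
noncomputable def rho (C : Matrix (Fin m) (Fin n) ℝ) (RA : Finset (Fin m))
    (CB : Finset (Fin n)) : ℝ :=
  cut C RA CB / (volRow C RA * volCol C CB)

/-- A proper `k`-partition: nonempty parts, pairwise disjoint, covering everything. -/
def IsProperPartition {N k : ℕ} (P : Fin k → Finset (Fin N)) : Prop :=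
  (∀ a, (P a).Nonempty) ∧ (∀ a b, a ≠ b → Disjoint (P a) (P b)) ∧ (∀ i, ∃ a, i ∈ P a)

/-- The discrepancy `disc(C; R_1,…,R_k, C_1,…,C_k)` of `C` in the given
proper `k`-partitions of its rows and columns. -/
noncomputable def discPart {k : ℕ} (C : Matrix (Fin m) (Fin n) ℝ)
    (R : Fin k → Finset (Fin m)) (Cc : Fin k → Finset (Fin n)) : ℝ :=
  sSup {t : ℝ | ∃ (a b : Fin k) (X : Finset (Fin m)) (Y : Finset (Fin n)),
    X ⊆ R a ∧ Y ⊆ Cc b ∧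
    t = |cut C X Y - rho C (R a) (Cc b) * volRow C X * volCol C Y| /
        Real.sqrt (volRow C X * volCol C Y)}

/-- The minimum `k`-way discrepancy `disc_k(C)`. -/
noncomputable def disck (C : Matrix (Fin m) (Fin n) ℝ) (k : ℕ) : ℝ :=
  sInf {t : ℝ | ∃ (R : Fin k → Finset (Fin m)) (Cc : Fin k → Finset (Fin n)),
    IsProperPartition R ∧ IsProperPartition Cc ∧ t = discPart C R Cc}

/-- The normalized table `C_nor = D_row^{-1/2} C D_col^{-1/2}`. -/
noncomputable def Cnor (C : Matrix (Fin m) (Fin n) ℝ) : Matrix (Fin m) (Fin n) ℝ :=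
  Matrix.diagonal (fun i => (Real.sqrt (rowSum C i))⁻¹) * C *
    Matrix.diagonal (fun j => (Real.sqrt (colSum C j))⁻¹)

/-- The (unsorted) singular values of a matrix, i.e. the square roots of the
eigenvalues of `Aᴴ A`. -/
noncomputable def svFin (A : Matrix (Fin m) (Fin n) ℝ) : Fin n → ℝ :=
  fun i => Real.sqrt ((Matrix.isHermitian_conjTranspose_mul_self A).eigenvalues i)

/-- `sval A k` is the `(k+1)`-th largest singular value of `A`
(0-indexed: `sval A 0` is the largest); it is `0` when `k ≥ n`. -/
noncomputable def sval (A : Matrix (Fin m) (Fin n) ℝ) (k : ℕ) : ℝ :=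
  if h : k < n then svFin A (Tuple.sort (svFin A) (Fin.rev ⟨k, h⟩)) else 0

/-- Irreducibility of a (nonnegative) square matrix. -/
def MatIrreducible {N : ℕ} (M : Matrix (Fin N) (Fin N) ℝ) : Prop :=
  ∀ i j, ∃ t : ℕ, 1 ≤ t ∧ 0 < (M ^ t) i j

lemma exists_proper_partition {N k : ℕ} (hk1 : 1 ≤ k) (hkN : k ≤ N) :
    ∃ P : Fin k → Finset (Fin N), IsProperPartition P := by
  refine ⟨fun a => Finset.univ.filter
      (fun i => (⟨min i.val (k-1), by omega⟩ : Fin k) = a), ?_, ?_, ?_⟩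
  · intro a
    refine ⟨⟨a.val, by omega⟩, ?_⟩
    simp only [Finset.mem_filter, Finset.mem_univ, true_and]
    ext
    simp only
    omega
  · intro a b hab
    rw [Finset.disjoint_left]
    intro i hi hib
    simp only [Finset.mem_filter, Finset.mem_univ, true_and] at hi hib
    exact hab (hi.symm.trans hib)
  · intro i
    exact ⟨⟨min i.val (k-1), by omega⟩, by simp⟩

/-- For every non-decomposable contingency table `C` and `1 ≤ k ≤ rk C`:
if `disc_k(C) = 0` then `s_k = 0`, where `s_k` is the `k`-th largest nontrivial
singular value of the normalized table `C_nor`. -/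
theorem zero_discrepancy_implies_zero_singular_value
    (C : Matrix (Fin m) (Fin n) ℝ)
    (hnonneg : ∀ i j, 0 ≤ C i j)
    (hsum : ∑ i, ∑ j, C i j = 1)
    (hirr : if m ≤ n then MatIrreducible (C * Cᵀ) else MatIrreducible (Cᵀ * C))
    (k : ℕ) (hk1 : 1 ≤ k) (hk2 : k ≤ C.rank)
    (hdisc : disck C k = 0) :
    sval (Cnor C) k = 0 := by
  by_cases hkn : k < n
  swap
  · rw [sval, dif_neg hkn]
  have hkm : k ≤ m := hk2.trans ((Matrix.rank_le_card_height C).trans (by simp))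
  -- Step 1: obtain partitions achieving zero discrepancy
  have hSfin : {t : ℝ | ∃ (R : Fin k → Finset (Fin m)) (Cc : Fin k → Finset (Fin n)),
      IsProperPartition R ∧ IsProperPartition Cc ∧ t = discPart C R Cc}.Finite := by
    apply Set.Finite.subset (Set.finite_range
      (fun p : (Fin k → Finset (Fin m)) × (Fin k → Finset (Fin n)) => discPart C p.1 p.2))
    rintro t ⟨R, Cc, _, _, rfl⟩
    exact ⟨(R, Cc), rfl⟩
  have hSne : {t : ℝ | ∃ (R : Fin k → Finset (Fin m)) (Cc : Fin k → Finset (Fin n)),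
      IsProperPartition R ∧ IsProperPartition Cc ∧ t = discPart C R Cc}.Nonempty := by
    obtain ⟨R, hR⟩ := exists_proper_partition hk1 hkm
    obtain ⟨Cc, hCc⟩ := exists_proper_partition hk1 hkn.le
    exact ⟨_, R, Cc, hR, hCc, rfl⟩
  have hmem := hSne.csInf_mem hSfin
  rw [← disck, hdisc] at hmem
  obtain ⟨R, Cc, hR, hCc, h0⟩ := hmem
  rw [discPart] at h0
  -- choose the part containing each row / column
  have ha0 : ∀ i : Fin m, i ∈ R ((hR.2.2 i).choose) := fun i => (hR.2.2 i).choose_spec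
  have hb0 : ∀ j : Fin n, j ∈ Cc ((hCc.2.2 j).choose) := fun j => (hCc.2.2 j).choose_spec
  set a0 : Fin m → Fin k := fun i => (hR.2.2 i).choose with ha0def
  set b0 : Fin n → Fin k := fun j => (hCc.2.2 j).choose with hb0def
  -- the discrepancy value set is finite hence bounded above
  have hTfin : {t : ℝ | ∃ (a b : Fin k) (X : Finset (Fin m)) (Y : Finset (Fin n)),
      X ⊆ R a ∧ Y ⊆ Cc b ∧
      t = |cut C X Y - rho C (R a) (Cc b) * volRow C X * volCol C Y| /
          Real.sqrt (volRow C X * volCol C Y)}.Finite := by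
    apply Set.Finite.subset (Set.finite_range
      (fun p : Fin k × Fin k × Finset (Fin m) × Finset (Fin n) =>
        |cut C p.2.2.1 p.2.2.2 - rho C (R p.1) (Cc p.2.1) * volRow C p.2.2.1 * volCol C p.2.2.2| /
          Real.sqrt (volRow C p.2.2.1 * volCol C p.2.2.2)))
    rintro t ⟨a, b, X, Y, _, _, rfl⟩
    exact ⟨(a, b, X, Y), rfl⟩
  -- key pointwise identity
  have key : ∀ i j, rowSum C i ≠ 0 → colSum C j ≠ 0 →
      C i j = rho C (R (a0 i)) (Cc (b0 j)) * rowSum C i * colSum C j := by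
    intro i j hdi hej
    have hdi' : 0 < rowSum C i :=
      lt_of_le_of_ne (Finset.sum_nonneg fun j' _ => hnonneg i j') (Ne.symm hdi)
    have hej' : 0 < colSum C j :=
      lt_of_le_of_ne (Finset.sum_nonneg fun i' _ => hnonneg i' j) (Ne.symm hej)
    have hel : |cut C {i} {j} - rho C (R (a0 i)) (Cc (b0 j)) * volRow C {i} * volCol C {j}| /
        Real.sqrt (volRow C {i} * volCol C {j}) ∈
        {t : ℝ | ∃ (a b : Fin k) (X : Finset (Fin m)) (Y : Finset (Fin n)),
          X ⊆ R a ∧ Y ⊆ Cc b ∧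
          t = |cut C X Y - rho C (R a) (Cc b) * volRow C X * volCol C Y| /
              Real.sqrt (volRow C X * volCol C Y)} :=
      ⟨a0 i, b0 j, {i}, {j}, Finset.singleton_subset_iff.2 (ha0 i),
        Finset.singleton_subset_iff.2 (hb0 j), rfl⟩
    have hle := le_csSup hTfin.bddAbove hel
    rw [← h0] at hle
    have hge : (0:ℝ) ≤ |cut C {i} {j} - rho C (R (a0 i)) (Cc (b0 j)) * volRow C {i} * volCol C {j}| /
        Real.sqrt (volRow C {i} * volCol C {j}) :=
      div_nonneg (abs_nonneg _) (Real.sqrt_nonneg _)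
    have hval0 := le_antisymm hle hge
    have hv1 : volRow C ({i} : Finset (Fin m)) = rowSum C i := Finset.sum_singleton _ _
    have hv2 : volCol C ({j} : Finset (Fin n)) = colSum C j := Finset.sum_singleton _ _
    have hcut : cut C ({i} : Finset (Fin m)) ({j} : Finset (Fin n)) = C i j := by
      simp [cut]
    rw [hv1, hv2, hcut] at hval0
    have hden : 0 < Real.sqrt (rowSum C i * colSum C j) :=
      Real.sqrt_pos.2 (mul_pos hdi' hej')
    rw [div_eq_zero_iff] at hval0
    rcases hval0 with h | h
    · have := abs_eq_zero.1 h
      linarith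
    · exact absurd h hden.ne'
  have hrow0 : ∀ i j, rowSum C i = 0 → C i j = 0 := fun i j h =>
    (Finset.sum_eq_zero_iff_of_nonneg (fun j' _ => hnonneg i j')).1 h j (Finset.mem_univ j)
  have hcol0 : ∀ i j, colSum C j = 0 → C i j = 0 := fun i j h =>
    (Finset.sum_eq_zero_iff_of_nonneg (fun i' _ => hnonneg i' j)).1 h i (Finset.mem_univ i)
  -- factor Cnor through rank-k matrices
  set U : Matrix (Fin m) (Fin k) ℝ :=
    Matrix.of (fun i a => if i ∈ R a then Real.sqrt (rowSum C i) else 0) with hU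
  set W : Matrix (Fin k) (Fin n) ℝ :=
    Matrix.of (fun a j => rho C (R a) (Cc (b0 j)) * Real.sqrt (colSum C j)) with hW
  have hfact : Cnor C = U * W := by
    ext i j
    rw [Matrix.mul_apply]
    have hsum' : ∑ a, U i a * W a j = U i (a0 i) * W (a0 i) j := by
      apply Finset.sum_eq_single
      · intro a _ hne
        have hnotin : i ∉ R a := fun hmemi =>
          (Finset.disjoint_left.1 (hR.2.1 a (a0 i) hne) hmemi) (ha0 i)
        simp [hU, hnotin]
      · intro h
        exact absurd (Finset.mem_univ _) h
    rw [hsum']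
    simp only [hU, hW, Matrix.of_apply, if_pos (ha0 i)]
    rw [if_pos (show i ∈ R (a0 i) from ha0 i)]
    rw [Cnor, Matrix.mul_diagonal, Matrix.diagonal_mul]
    by_cases hdi : rowSum C i = 0
    · rw [hrow0 i j hdi, hdi]
      simp
    by_cases hej : colSum C j = 0
    · rw [hcol0 i j hej, hej]
      simp
    · have hdi' : 0 < rowSum C i :=
        lt_of_le_of_ne (Finset.sum_nonneg fun j' _ => hnonneg i j') (Ne.symm hdi)
      have hej' : 0 < colSum C j :=
        lt_of_le_of_ne (Finset.sum_nonneg fun i' _ => hnonneg i' j) (Ne.symm hej)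
      have h1 : Real.sqrt (rowSum C i) ≠ 0 := (Real.sqrt_pos.2 hdi').ne'
      have h2 : Real.sqrt (colSum C j) ≠ 0 := (Real.sqrt_pos.2 hej').ne'
      have e1 : (Real.sqrt (rowSum C i))⁻¹ * rowSum C i = Real.sqrt (rowSum C i) := by
        rw [inv_mul_eq_div, div_eq_iff h1]
        exact (Real.mul_self_sqrt hdi'.le).symm
      have e2 : (Real.sqrt (colSum C j))⁻¹ * colSum C j = Real.sqrt (colSum C j) := by
        rw [inv_mul_eq_div, div_eq_iff h2]
        exact (Real.mul_self_sqrt hej'.le).symm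
      rw [key i j hdi hej]
      calc (Real.sqrt (rowSum C i))⁻¹ *
            (rho C (R (a0 i)) (Cc (b0 j)) * rowSum C i * colSum C j) *
            (Real.sqrt (colSum C j))⁻¹
          = ((Real.sqrt (rowSum C i))⁻¹ * rowSum C i) * rho C (R (a0 i)) (Cc (b0 j)) *
            ((Real.sqrt (colSum C j))⁻¹ * colSum C j) := by ring
        _ = Real.sqrt (rowSum C i) * (rho C (R (a0 i)) (Cc (b0 j)) * Real.sqrt (colSum C j)) := by
            rw [e1, e2]; ring
  -- rank bound
  have hrank : (Cnor C).rank ≤ k := by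
    rw [hfact]
    exact (Matrix.rank_mul_le_left U W).trans
      ((Matrix.rank_le_card_width U).trans_eq (Fintype.card_fin k))
  have hH := Matrix.isHermitian_conjTranspose_mul_self (Cnor C)
  have hrank2 : ((Cnor C)ᵀ * Cnor C).rank ≤ k := by
    rw [Matrix.rank_transpose_mul_self]
    exact hrank
  have hcard : Fintype.card {i // hH.eigenvalues i ≠ 0} ≤ k := by
    rw [← hH.rank_eq_card_non_zero_eigs, Matrix.conjTranspose_eq_transpose_of_trivial]
    exact hrank2
  -- conclude about the sorted singular value
  rw [sval, dif_pos hkn]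
  by_contra hne
  have hpos : 0 < svFin (Cnor C) (Tuple.sort (svFin (Cnor C)) (Fin.rev ⟨k, hkn⟩)) :=
    lt_of_le_of_ne (Real.sqrt_nonneg _) (Ne.symm hne)
  have hmono := Tuple.monotone_sort (svFin (Cnor C))
  classical
  have hsub : (Finset.Ici (Fin.rev ⟨k, hkn⟩)).image (Tuple.sort (svFin (Cnor C))) ⊆
      Finset.univ.filter (fun i => hH.eigenvalues i ≠ 0) := by
    intro x hx
    simp only [Finset.mem_image, Finset.mem_Ici] at hx
    obtain ⟨y, hy, rfl⟩ := hx
    simp only [Finset.mem_filter, Finset.mem_univ, true_and]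
    intro h0'
    have hgt : 0 < svFin (Cnor C) (Tuple.sort (svFin (Cnor C)) y) :=
      hpos.trans_le (hmono hy)
    rw [svFin, h0'] at hgt
    simp at hgt
  have h1 := Finset.card_le_card hsub
  rw [Finset.card_image_of_injective _ (Equiv.injective _), Fin.card_Ici] at h1
  have hrev : (Fin.rev (⟨k, hkn⟩ : Fin n)).val = n - (k + 1) := Fin.val_rev _
  have hcard2 : (Finset.univ.filter (fun i => hH.eigenvalues i ≠ 0)).card =
      Fintype.card {i // hH.eigenvalues i ≠ 0} := (Fintype.card_subtype _).symm
  omega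

end Stmt14
end

section
/- Let x ∈ ℂⁿ with ‖x‖ = 1 and let D be an n×n diagonal matrix with positive diagonal entries d_1,…,d_n. Set f = ‖D^{-1}x‖, d = max_i d_i, and ε = 1/(3fd). Then ε ≤ 1/3 (since fd ≥ 1), and there exists a step-vector z ∈ ℂⁿ taking at most ⌈8π/ε⌉·⌈(4/ε)·log(2n/ε)⌉ distinct coordinate values such that ‖x − Dz‖ ≤ 1/3 and ‖Dz‖ ≤ 1. -/
open scoped BigOperators
open Classical

namespace Stmt15

/-- The Euclidean norm of a complex vector. -/
noncomputable def enormC {N : ℕ} (v : Fin N → ℂ) : ℝ :=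
  Real.sqrt (∑ i, ‖v i‖ ^ 2)

lemma enormC_sq {N : ℕ} (v : Fin N → ℂ) :
    (enormC v) ^ 2 = ∑ i, ‖v i‖ ^ 2 := by
  rw [enormC, Real.sq_sqrt]
  exact Finset.sum_nonneg fun i _ => sq_nonneg _

lemma enormC_le {N : ℕ} (v : Fin N → ℂ) {c : ℝ} (hc : 0 ≤ c)
    (h : ∑ i, ‖v i‖ ^ 2 ≤ c ^ 2) : enormC v ≤ c := by
  rw [enormC]
  calc Real.sqrt (∑ i, ‖v i‖ ^ 2) ≤ Real.sqrt (c ^ 2) := Real.sqrt_le_sqrt h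
    _ = c := Real.sqrt_sq hc

lemma log_ratio_lb {t : ℝ} (ht : 0 ≤ t) : t / (1 + t) ≤ Real.log (1 + t) := by
  have h1 : (0:ℝ) < 1 + t := by linarith
  have h2 := Real.log_le_sub_one_of_pos (x := (1 + t)⁻¹) (by positivity)
  rw [Real.log_inv] at h2
  have h3 : 1 - (1 + t)⁻¹ ≤ Real.log (1 + t) := by linarith
  calc t / (1 + t) = 1 - (1+t)⁻¹ := by field_simp; ring
    _ ≤ _ := h3

set_option maxHeartbeats 1600000 in
lemma round_point (ε δ ρ : ℝ) (M Q : ℕ) (hε0 : 0 < ε) (hε1 : ε ≤ 1/3)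
    (hδ0 : 0 < δ) (hρdef : ρ = 1 + ε/3) (hM1 : 1 ≤ M) (hδρM : 1 ≤ δ * ρ ^ M)
    (hQ : 8 * Real.pi / ε ≤ (Q:ℝ) + 1) (hQ75 : 75 ≤ Q)
    (w : ℂ) (hw1 : ‖w‖ ≤ 1) (hwδ : δ < ‖w‖) :
    ∃ k j : ℕ, k < M ∧ j < Q ∧
      (δ * ρ ^ k : ℝ) ≤ ‖w‖ ∧
      ‖w - ((δ * ρ ^ k : ℝ) : ℂ) *
        Complex.exp (((-Real.pi + 2 * Real.pi * j / Q : ℝ) : ℂ) * Complex.I)‖ ≤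
        17/20 * ε * ‖w‖ := by
  have hπ := Real.pi_gt_d6
  have hπ0 : (0:ℝ) < Real.pi := Real.pi_pos
  have hρ1 : 1 < ρ := by rw [hρdef]; linarith
  have hρ0 : (0:ℝ) < ρ := by linarith
  have hlogρ0 : 0 < Real.log ρ := Real.log_pos hρ1
  set a := ‖w‖ with hadef
  have ha0 : 0 < a := lt_trans hδ0 hwδ
  set θ := Complex.arg w with hθdef
  have hθ1 : -Real.pi < θ := Complex.neg_pi_lt_arg w
  have hθ2 : θ ≤ Real.pi := Complex.arg_le_pi w
  have hQ0 : (0:ℝ) < (Q:ℝ) := by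
    have : 0 < Q := by omega
    exact_mod_cast this
  -- magnitude rounding
  set L := Real.log (a / δ) / Real.log ρ with hLdef
  have hL0 : 0 ≤ L := by
    apply div_nonneg _ (le_of_lt hlogρ0)
    apply Real.log_nonneg
    rw [le_div_iff₀ hδ0]; linarith
  set k := min ⌊L⌋₊ (M - 1) with hkdef
  have hkM : k < M := lt_of_le_of_lt (min_le_right _ _) (by omega)
  set r := δ * ρ ^ k with hrdef
  have hr0 : 0 < r := by positivity
  have hLlog : Real.log (a / δ) = L * Real.log ρ := by
    rw [hLdef]; field_simp
  have hra : r ≤ a := by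
    have hk_le_L : (k:ℝ) ≤ L := by
      calc (k:ℝ) ≤ (⌊L⌋₊:ℝ) := by exact_mod_cast min_le_left _ _
        _ ≤ L := Nat.floor_le hL0
    have h1 : Real.log (ρ ^ k) ≤ Real.log (a / δ) := by
      rw [Real.log_pow, hLlog]
      nlinarith
    have h2 : ρ ^ k ≤ a / δ := (Real.log_le_log_iff (by positivity) (by positivity)).1 h1
    rw [hrdef]
    calc δ * ρ ^ k ≤ δ * (a / δ) := by nlinarith
      _ = a := by field_simp
  have harρ : a ≤ r * ρ := by
    rcases le_or_gt ⌊L⌋₊ (M-1) with hc | hc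
    · have hk : k = ⌊L⌋₊ := min_eq_left hc
      have hL_lt : L < (k:ℝ) + 1 := by
        rw [hk]; exact_mod_cast Nat.lt_floor_add_one L
      have h1 : Real.log (a/δ) < Real.log (ρ^(k+1)) := by
        rw [Real.log_pow, hLlog]; push_cast; nlinarith
      have h2 : a/δ < ρ^(k+1) := (Real.log_lt_log_iff (by positivity) (by positivity)).1 h1
      have h3 : a < δ * ρ^(k+1) := by
        rw [div_lt_iff₀ hδ0] at h2; nlinarith [h2]
      calc a ≤ δ * ρ^(k+1) := le_of_lt h3
        _ = r * ρ := by rw [hrdef, pow_succ]; ring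
    · have hk : k = M - 1 := min_eq_right (by omega)
      have hrρ : r * ρ = δ * ρ ^ M := by
        rw [hrdef, hk, mul_assoc, ← pow_succ]
        congr 2
        omega
      rw [hrρ]; exact le_trans hw1 hδρM
  -- phase rounding
  set t := (θ + Real.pi) * Q / (2 * Real.pi) with htdef
  have ht0 : 0 ≤ t := by
    apply div_nonneg _ (by positivity)
    apply mul_nonneg (by linarith) (le_of_lt hQ0)
  have htQ : t ≤ Q := by
    rw [htdef, div_le_iff₀ (by positivity)]
    nlinarith
  set j := min ⌊t⌋₊ (Q - 1) with hjdef
  have hjQ : j < Q := lt_of_le_of_lt (min_le_right _ _) (by omega)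
  set φ := -Real.pi + 2 * Real.pi * j / Q with hφdef
  have hjt : (j:ℝ) ≤ t := by
    calc (j:ℝ) ≤ (⌊t⌋₊:ℝ) := by exact_mod_cast min_le_left _ _
      _ ≤ t := Nat.floor_le ht0
  have htj1 : t ≤ (j:ℝ) + 1 := by
    rcases le_or_gt ⌊t⌋₊ (Q-1) with hc | hc
    · have hj : j = ⌊t⌋₊ := min_eq_left hc
      rw [hj]; exact le_of_lt (Nat.lt_floor_add_one t)
    · have hj : j = Q - 1 := min_eq_right (by omega)
      have hQcast : (j:ℝ) + 1 = (Q:ℝ) := by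
        rw [hj]; push_cast [Nat.cast_sub (by omega : 1 ≤ Q)]; ring
      rw [hQcast]; exact htQ
  have hθφ : θ - φ = 2 * Real.pi / Q * (t - j) := by
    rw [hφdef, htdef]; field_simp; ring
  have hΔ0 : 0 ≤ θ - φ := by
    rw [hθφ]
    apply mul_nonneg (by positivity) (by linarith)
  have hΔle : θ - φ ≤ 2 * Real.pi / Q := by
    rw [hθφ]
    calc 2 * Real.pi / Q * (t - j) ≤ 2 * Real.pi / Q * 1 := by
          apply mul_le_mul_of_nonneg_left (by linarith) (by positivity)
      _ = 2 * Real.pi / Q := mul_one _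
  have hΔ1 : θ - φ ≤ 1 := by
    have h75 : (75:ℝ) ≤ (Q:ℝ) := by exact_mod_cast hQ75
    have h2 : 2 * Real.pi / Q ≤ 1 := by
      rw [div_le_one hQ0]; nlinarith [Real.pi_lt_d2]
    exact le_trans hΔle h2
  -- assemble
  refine ⟨k, j, hkM, hjQ, hra, ?_⟩
  have hw_eq : ((a:ℝ):ℂ) * Complex.exp ((θ:ℝ) * Complex.I) = w :=
    Complex.norm_mul_exp_arg_mul_I w
  have hφc : ((-Real.pi + 2 * Real.pi * j / Q : ℝ) : ℂ) = ((φ:ℝ):ℂ) := by rw [hφdef]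
  rw [hφc]
  set E1 := Complex.exp ((θ:ℝ) * Complex.I) with hE1def
  set E2 := Complex.exp ((φ:ℝ) * Complex.I) with hE2def
  have key : w - ((r:ℝ):ℂ) * E2 = ((a - r : ℝ):ℂ) * E1 + ((r:ℝ):ℂ) * (E1 - E2) := by
    rw [← hw_eq]; push_cast; ring
  have hE1abs : ‖E1‖ = 1 := Complex.norm_exp_ofReal_mul_I θ
  have hE12 : ‖E1 - E2‖ ≤ 2 * (θ - φ) := by
    have hsplit : E1 - E2 = E2 * (Complex.exp (((θ - φ : ℝ):ℂ) * Complex.I) - 1) := by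
      rw [hE1def, hE2def, mul_sub, mul_one, ← Complex.exp_add]
      congr 1
      push_cast
      ring
    rw [hsplit, norm_mul, Complex.norm_exp_ofReal_mul_I, one_mul]
    have habs : ‖((θ - φ : ℝ):ℂ) * Complex.I‖ = θ - φ := by
      rw [norm_mul, Complex.norm_I, mul_one, Complex.norm_real, Real.norm_eq_abs, abs_of_nonneg hΔ0]
    have h2 : ‖((θ - φ:ℝ):ℂ) * Complex.I‖ ≤ 1 := by rw [habs]; exact hΔ1
    calc ‖Complex.exp (((θ - φ : ℝ):ℂ) * Complex.I) - 1‖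
        ≤ 2 * ‖((θ - φ:ℝ):ℂ) * Complex.I‖ := Complex.norm_exp_sub_one_le h2
      _ = 2 * (θ - φ) := by rw [habs]
  have h4πQ : 4 * Real.pi / Q ≤ 31/60 * ε := by
    rw [div_le_iff₀ hQ0]
    have hQlb' : 8 * Real.pi - ε ≤ ε * Q := by
      have := (div_le_iff₀ hε0).1 hQ
      nlinarith
    nlinarith
  have har : a - r ≤ a * (ε / 3) := by
    have h1 : a - r ≤ r * (ρ - 1) := by linarith
    have hρ1' : ρ - 1 = ε / 3 := by rw [hρdef]; ring
    nlinarith [hra, h1]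
  calc ‖w - ((r:ℝ):ℂ) * E2‖
      ≤ ‖((a - r : ℝ):ℂ) * E1‖ + ‖((r:ℝ):ℂ) * (E1 - E2)‖ := by
        rw [key]; exact norm_add_le _ _
    _ = |a - r| * 1 + |r| * ‖E1 - E2‖ := by
        rw [norm_mul, norm_mul, hE1abs, Complex.norm_real, Real.norm_eq_abs, Complex.norm_real, Real.norm_eq_abs]
    _ ≤ (a - r) + r * (2 * (θ - φ)) := by
        rw [abs_of_nonneg (by linarith : (0:ℝ) ≤ a - r), abs_of_nonneg (le_of_lt hr0)]
        have := mul_le_mul_of_nonneg_left hE12 (le_of_lt hr0)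
        linarith
    _ ≤ a * (ε/3) + a * (4 * Real.pi / Q) := by
        have h1 : r * (2 * (θ - φ)) ≤ a * (2 * (2 * Real.pi / Q)) := by
          apply mul_le_mul hra (by linarith) (by linarith) (le_of_lt ha0)
        have h2 : a * (2 * (2 * Real.pi / Q)) = a * (4 * Real.pi / Q) := by ring
        linarith
    _ ≤ a * (ε/3) + a * (31/60 * ε) := by nlinarith
    _ = 17/20 * ε * a := by ring

set_option maxHeartbeats 1600000 in
lemma approx {n : ℕ} (hn : 0 < n) (u : Fin n → ℂ)
    (hu : ∑ i, ‖u i‖ ^ 2 = 1)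
    (ε : ℝ) (hε0 : 0 < ε) (hε1 : ε ≤ 1/3) :
    ∃ y : Fin n → ℂ,
      (Finset.univ.image y).card ≤
        ⌈8 * Real.pi / ε⌉₊ * ⌈4 / ε * Real.log (2 * n / ε)⌉₊ ∧
      (∀ i, ‖y i‖ ≤ ‖u i‖) ∧
      ∑ i, ‖u i - y i‖ ^ 2 ≤ ε ^ 2 := by
  have hπ := Real.pi_gt_d6
  have hn1 : (1:ℝ) ≤ (n:ℝ) := by exact_mod_cast hn
  set P : ℕ := ⌈8 * Real.pi / ε⌉₊ with hPdef
  set M : ℕ := ⌈4 / ε * Real.log (2 * n / ε)⌉₊ with hMdef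
  set Q : ℕ := P - 1 with hQdef
  have hP76 : 76 ≤ P := by
    have h1 : (75:ℝ) < 8 * Real.pi / ε := by
      rw [lt_div_iff₀ hε0]
      nlinarith
    have := (Nat.lt_ceil (n := 75)).2 h1
    omega
  have hQ75 : 75 ≤ Q := by omega
  have hQR : (Q:ℝ) = (P:ℝ) - 1 := by
    rw [hQdef]
    push_cast [Nat.cast_sub (by omega : 1 ≤ P)]
    ring
  have hPge : 8 * Real.pi / ε ≤ (P:ℝ) := Nat.le_ceil _
  have hQge : 8 * Real.pi / ε ≤ (Q:ℝ) + 1 := by rw [hQR]; linarith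
  have hT6 : (6:ℝ) ≤ 2 * n / ε := by
    rw [le_div_iff₀ hε0]; nlinarith
  have hlogT : 0 ≤ Real.log (2 * n / ε) := Real.log_nonneg (by linarith)
  have hM1 : 1 ≤ M := by
    have hpos : (0:ℝ) < 4 / ε * Real.log (2 * n / ε) := by
      have : (0:ℝ) < Real.log (2*n/ε) := Real.log_pos (by linarith)
      positivity
    rw [hMdef]
    exact Nat.one_le_iff_ne_zero.2 (by
      intro h
      have := Nat.ceil_eq_zero.1 h
      linarith)
  have hMge : 4 / ε * Real.log (2 * n / ε) ≤ (M:ℝ) := Nat.le_ceil _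
  have hsn : 0 < Real.sqrt n := Real.sqrt_pos.2 (by linarith)
  set δ : ℝ := ε / (2 * Real.sqrt n) with hδdef
  have hδ0 : 0 < δ := by positivity
  set ρ : ℝ := 1 + ε / 3 with hρdef
  have hρ1 : 1 < ρ := by rw [hρdef]; linarith
  have hρ0 : (0:ℝ) < ρ := by linarith
  have hlogρ : 3 * ε / 10 ≤ Real.log ρ := by
    have h := log_ratio_lb (t := ε/3) (by linarith)
    have h2 : 3 * ε / 10 ≤ (ε/3) / (1 + ε/3) := by
      rw [div_le_div_iff₀ (by norm_num) (by linarith)]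
      nlinarith
    calc 3 * ε / 10 ≤ (ε/3) / (1 + ε/3) := h2
      _ ≤ Real.log (1 + ε/3) := h
      _ = Real.log ρ := by rw [hρdef]
  have hlogρ0 : 0 < Real.log ρ := Real.log_pos hρ1
  have hδρM : 1 ≤ δ * ρ ^ M := by
    have hsn_le : Real.sqrt n ≤ (n:ℝ) := by
      rw [Real.sqrt_le_left (by linarith)]
      nlinarith
    have hMlogρ : Real.log (2 * Real.sqrt n / ε) ≤ (M:ℝ) * Real.log ρ := by
      have h2 : Real.log (2 * Real.sqrt n / ε) ≤ Real.log (2 * n / ε) := by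
        apply (Real.log_le_log_iff (by positivity) (by positivity)).2
        gcongr
      have h3 : (4 / ε * Real.log (2 * n / ε)) * (3 * ε / 10) ≤ (M:ℝ) * Real.log ρ := by
        apply mul_le_mul hMge hlogρ (by positivity) (by positivity)
      have heq : (4 / ε * Real.log (2 * n / ε)) * (3 * ε / 10)
          = 6/5 * Real.log (2 * n / ε) := by
        field_simp
        ring
      rw [heq] at h3
      linarith
    have hδmul : δ * (2 * Real.sqrt n / ε) = 1 := by
      rw [hδdef]; field_simp
    have hlogδ : Real.log δ + Real.log (2 * Real.sqrt n / ε) = 0 := by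
      rw [← Real.log_mul (ne_of_gt hδ0) (by positivity), hδmul, Real.log_one]
    have hlog : 0 ≤ Real.log (δ * ρ ^ M) := by
      rw [Real.log_mul (ne_of_gt hδ0) (by positivity), Real.log_pow]
      linarith
    exact (Real.log_nonneg_iff (by positivity)).1 hlog
  -- per-coordinate choice
  have ha1 : ∀ i, ‖u i‖ ≤ 1 := by
    intro i
    have hterm : ‖u i‖ ^ 2 ≤ 1 := by
      rw [← hu]
      exact Finset.single_le_sum (fun j _ => sq_nonneg (‖u j‖)) (Finset.mem_univ i)
    nlinarith [norm_nonneg (u i)]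
  have H : ∀ i, ∃ c : ℂ,
      (c = 0 ∨ ∃ k, k < M ∧ ∃ j, j < Q ∧ c = ((δ * ρ ^ k : ℝ) : ℂ) *
        Complex.exp (((-Real.pi + 2 * Real.pi * j / Q : ℝ) : ℂ) * Complex.I)) ∧
      ‖c‖ ≤ ‖u i‖ ∧
      ‖u i - c‖ ^ 2 ≤ 289/400 * ε^2 * ‖u i‖^2 + δ^2 := by
    intro i
    by_cases h : δ < ‖u i‖
    · obtain ⟨k, j, hk, hj, hrle, hbd⟩ :=
        round_point ε δ ρ M Q hε0 hε1 hδ0 hρdef hM1 hδρM hQge hQ75 (u i) (ha1 i) h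
      refine ⟨_, Or.inr ⟨k, hk, j, hj, rfl⟩, ?_, ?_⟩
      · rw [norm_mul, Complex.norm_exp_ofReal_mul_I, mul_one, Complex.norm_real, Real.norm_eq_abs,
          abs_of_nonneg (by positivity)]
        exact hrle
      · have h0 : 0 ≤ ‖u i‖ := norm_nonneg _
        have h1 : 0 ≤ ‖u i - ((δ * ρ ^ k : ℝ) : ℂ) *
            Complex.exp (((-Real.pi + 2 * Real.pi * j / Q : ℝ) : ℂ) * Complex.I)‖ :=
          norm_nonneg _
        nlinarith [sq_nonneg δ, sq_nonneg ε, mul_pos hε0 hε0]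
    · refine ⟨0, Or.inl rfl, by simp, ?_⟩
      push_neg at h
      simp only [sub_zero]
      have h0 : 0 ≤ ‖u i‖ := norm_nonneg _
      nlinarith [sq_nonneg (ε * ‖u i‖)]
  choose y hy0 hyle hybd using H
  have hxiall : ∀ i ∈ Finset.univ, ‖u i - y i‖^2
      ≤ 289/400 * ε^2 * ‖u i‖^2 + δ^2 := fun i _ => hybd i
  refine ⟨y, ?_, hyle, ?_⟩
  · -- cardinality
    set T : Finset ℂ := (Finset.range M ×ˢ Finset.range Q).image
      (fun p => ((δ * ρ ^ p.1 : ℝ) : ℂ) *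
        Complex.exp (((-Real.pi + 2 * Real.pi * p.2 / Q : ℝ) : ℂ) * Complex.I)) with hTdef
    have hsub : Finset.univ.image y ⊆ insert 0 T := by
      intro c hc
      simp only [Finset.mem_image, Finset.mem_univ, true_and] at hc
      obtain ⟨i, rfl⟩ := hc
      rcases hy0 i with h | ⟨k, hk, j, hj, h⟩
      · rw [h]; exact Finset.mem_insert_self _ _
      · apply Finset.mem_insert_of_mem
        rw [hTdef, h]
        exact Finset.mem_image.2 ⟨(k, j),
          Finset.mem_product.2 ⟨Finset.mem_range.2 hk, Finset.mem_range.2 hj⟩, rfl⟩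
    have hTcard : T.card ≤ M * Q := by
      calc T.card ≤ (Finset.range M ×ˢ Finset.range Q).card := Finset.card_image_le
        _ = M * Q := by rw [Finset.card_product, Finset.card_range, Finset.card_range]
    calc (Finset.univ.image y).card ≤ (insert 0 T).card := Finset.card_le_card hsub
      _ ≤ T.card + 1 := Finset.card_insert_le _ _
      _ ≤ M * Q + 1 := by omega
      _ ≤ P * M := by
          have hQP : Q + 1 = P := by omega
          calc M * Q + 1 ≤ M * Q + M := by omega
            _ = M * (Q + 1) := by ring
            _ = P * M := by rw [hQP]; ring
  · -- the squared error
    have hδ2 : (n:ℝ) * δ^2 = ε^2/4 := by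
      have h2 : (2 * Real.sqrt n)^2 = 4 * n := by
        rw [mul_pow, Real.sq_sqrt (by linarith : (0:ℝ) ≤ (n:ℝ))]
        norm_num
      rw [hδdef, div_pow, h2]
      field_simp
    calc ∑ i, ‖u i - y i‖^2
        ≤ ∑ i, (289/400 * ε^2 * ‖u i‖^2 + δ^2) := Finset.sum_le_sum hxiall
      _ = 289/400 * ε^2 * (∑ i, ‖u i‖^2) + n * δ^2 := by
          rw [Finset.sum_add_distrib, ← Finset.mul_sum]
          simp [Finset.card_univ]
      _ = 289/400 * ε^2 + ε^2/4 := by rw [hu, hδ2]; ring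
      _ ≤ ε^2 := by nlinarith [sq_nonneg ε]

set_option maxHeartbeats 1600000 in
/-- From the Bollobás–Nikiforov approximation lemma: for a unit vector `x ∈ ℂⁿ`
and a diagonal matrix `D` with positive diagonal entries `d_1,…,d_n`, setting
`f = ‖D⁻¹x‖`, `d = max_i d_i` and `ε = 1/(3fd)`, one has `ε ≤ 1/3` (since
`fd ≥ 1`), and there is a step-vector `z ∈ ℂⁿ` taking at most
`⌈8π/ε⌉·⌈(4/ε)·log(2n/ε)⌉` distinct coordinate values such that
`‖x - Dz‖ ≤ 1/3` and `‖Dz‖ ≤ 1`. -/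
theorem step_vector_from_BN {n : ℕ}
    (x : Fin n → ℂ) (hx : enormC x = 1)
    (dd : Fin n → ℝ) (hdd : ∀ i, 0 < dd i)
    (f dmax ε : ℝ)
    (hf : f = enormC (fun i => ((dd i : ℂ))⁻¹ * x i))
    (hdmax : IsGreatest (Set.range dd) dmax)
    (hε : ε = 1 / (3 * f * dmax)) :
    ε ≤ 1 / 3 ∧
    ∃ z : Fin n → ℂ,
      (Finset.univ.image z).card ≤
        ⌈8 * Real.pi / ε⌉₊ * ⌈4 / ε * Real.log (2 * n / ε)⌉₊ ∧
      enormC (fun i => x i - (dd i : ℂ) * z i) ≤ 1 / 3 ∧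
      enormC (fun i => (dd i : ℂ) * z i) ≤ 1 := by
  rcases Nat.eq_zero_or_pos n with hn0 | hn
  · exfalso
    subst hn0
    rw [enormC] at hx
    simp at hx
  obtain ⟨⟨i0, hi0⟩, hub⟩ := hdmax
  have hub' : ∀ i, dd i ≤ dmax := fun i => hub (Set.mem_range_self i)
  have hdmax0 : 0 < dmax := hi0 ▸ hdd i0
  have hsum : ∑ i, ‖x i‖ ^ 2 = 1 := by
    have h := enormC_sq x
    rw [hx] at h
    linarith
  set w : Fin n → ℂ := fun i => ((dd i : ℂ))⁻¹ * x i with hwdef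
  have hf2 : f ^ 2 = ∑ i, ‖w i‖ ^ 2 := by rw [hf]; exact enormC_sq w
  have habsw : ∀ i, ‖w i‖ = (dd i)⁻¹ * ‖x i‖ := by
    intro i
    rw [hwdef]
    simp only [norm_mul, norm_inv, Complex.norm_real, Real.norm_eq_abs, abs_of_pos (hdd i)]
  have hfd : 1 ≤ f * dmax := by
    have h1 : ∀ i, ‖x i‖^2 / dmax^2 ≤ ‖w i‖^2 := by
      intro i
      have hddi := hdd i
      have h3 := hub' i
      have h2 : (dd i)^2 ≤ dmax^2 := by nlinarith
      have h4 : ‖x i‖^2 / dmax^2 ≤ ‖x i‖^2 / (dd i)^2 :=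
        div_le_div_of_nonneg_left (sq_nonneg _) (by positivity) h2
      have h5 : ‖w i‖^2 = ‖x i‖^2 / (dd i)^2 := by
        rw [habsw i, mul_pow, inv_pow]
        field_simp
      rw [h5]
      exact h4
    have h2 : 1/dmax^2 ≤ f^2 := by
      rw [hf2]
      calc 1/dmax^2 = ∑ i, ‖x i‖^2/dmax^2 := by
            rw [← Finset.sum_div, hsum]
        _ ≤ _ := Finset.sum_le_sum fun i _ => h1 i
    have h3 : 1 ≤ f^2 * dmax^2 := by
      rw [div_le_iff₀ (by positivity : (0:ℝ) < dmax^2)] at h2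
      linarith
    have hf0 : 0 ≤ f := by rw [hf]; exact Real.sqrt_nonneg _
    nlinarith [mul_nonneg hf0 hdmax0.le, sq_nonneg (f * dmax - 1), sq_nonneg (f * dmax + 1)]
  have hf0 : 0 < f := by nlinarith
  have hε0 : 0 < ε := by rw [hε]; positivity
  have hε3 : ε ≤ 1/3 := by
    rw [hε, div_le_div_iff₀ (by nlinarith) (by norm_num)]
    nlinarith
  refine ⟨hε3, ?_⟩
  set u : Fin n → ℂ := fun i => w i / (f:ℂ) with hudef
  have hfne : (f : ℂ) ≠ 0 := by
    simp only [ne_eq, Complex.ofReal_eq_zero]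
    exact ne_of_gt hf0
  have husum : ∑ i, ‖u i‖^2 = 1 := by
    have hterm : ∀ i, ‖u i‖^2 = ‖w i‖^2 / f^2 := by
      intro i
      rw [hudef]
      simp only [norm_div, Complex.norm_real, Real.norm_eq_abs, abs_of_pos hf0, div_pow]
    rw [Finset.sum_congr rfl (fun i _ => hterm i), ← Finset.sum_div, ← hf2]
    field_simp
  have hxi : ∀ i, x i = (dd i:ℂ) * (f:ℂ) * u i := by
    intro i
    rw [hudef, hwdef]
    have hddne : (dd i : ℂ) ≠ 0 := by
      simp only [ne_eq, Complex.ofReal_eq_zero]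
      exact ne_of_gt (hdd i)
    field_simp
  obtain ⟨y, hcard, hyle, hsum2⟩ := approx hn u husum ε hε0 hε3
  refine ⟨fun i => (f:ℂ) * y i, ?_, ?_, ?_⟩
  · calc (Finset.univ.image fun i => (f:ℂ) * y i).card
        = ((Finset.univ.image y).image (fun c => (f:ℂ) * c)).card := by
          rw [Finset.image_image]
          rfl
      _ ≤ (Finset.univ.image y).card := Finset.card_image_le
      _ ≤ _ := hcard
  · apply enormC_le _ (by norm_num)
    have hterm : ∀ i ∈ Finset.univ, ‖x i - (dd i:ℂ) * ((f:ℂ) * y i)‖^2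
        ≤ (dmax*f)^2 * ‖u i - y i‖^2 := by
      intro i _
      have heq : x i - (dd i:ℂ) * ((f:ℂ) * y i) = (dd i:ℂ) * (f:ℂ) * (u i - y i) := by
        rw [hxi i]; ring
      rw [heq, norm_mul, norm_mul, Complex.norm_real, Real.norm_eq_abs, Complex.norm_real, Real.norm_eq_abs,
        abs_of_pos (hdd i), abs_of_pos hf0]
      have h2 : 0 ≤ ‖u i - y i‖ := norm_nonneg _
      have h3 := hub' i
      have h4 := hdd i
      have h5 : dd i * f * ‖u i - y i‖ ≤ dmax * f * ‖u i - y i‖ := by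
        apply mul_le_mul_of_nonneg_right _ h2
        nlinarith
      calc (dd i * f * ‖u i - y i‖)^2
          ≤ (dmax * f * ‖u i - y i‖)^2 := pow_le_pow_left₀ (by positivity) h5 2
        _ = (dmax*f)^2 * ‖u i - y i‖^2 := by ring
    calc ∑ i, ‖x i - (dd i:ℂ) * ((f:ℂ) * y i)‖^2
        ≤ ∑ i, (dmax*f)^2 * ‖u i - y i‖^2 := Finset.sum_le_sum hterm
      _ = (dmax*f)^2 * ∑ i, ‖u i - y i‖^2 := by rw [Finset.mul_sum]
      _ ≤ (dmax*f)^2 * ε^2 := by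
          apply mul_le_mul_of_nonneg_left hsum2 (by positivity)
      _ = (dmax*f*ε)^2 := by ring
      _ = (1/3)^2 := by
          have : dmax * f * ε = 1/3 := by
            rw [hε]
            field_simp
          rw [this]
  · apply enormC_le _ (by norm_num)
    have hterm : ∀ i ∈ Finset.univ, ‖(dd i:ℂ) * ((f:ℂ) * y i)‖^2
        ≤ ‖x i‖^2 := by
      intro i _
      rw [norm_mul, norm_mul, Complex.norm_real, Real.norm_eq_abs, Complex.norm_real, Real.norm_eq_abs,
        abs_of_pos (hdd i), abs_of_pos hf0]
      have hxabs : ‖x i‖ = dd i * f * ‖u i‖ := by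
        rw [hxi i, norm_mul, norm_mul, Complex.norm_real, Real.norm_eq_abs, Complex.norm_real, Real.norm_eq_abs,
          abs_of_pos (hdd i), abs_of_pos hf0]
      rw [hxabs]
      have h1 := hyle i
      have h2 := hdd i
      have h3 : 0 ≤ ‖y i‖ := norm_nonneg _
      have h5 : dd i * (f * ‖y i‖) ≤ dd i * f * ‖u i‖ := by
        rw [← mul_assoc]
        apply mul_le_mul_of_nonneg_left h1 (by positivity)
      exact pow_le_pow_left₀ (by positivity) h5 2
    calc ∑ i, ‖(dd i:ℂ) * ((f:ℂ) * y i)‖^2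
        ≤ ∑ i, ‖x i‖^2 := Finset.sum_le_sum hterm
      _ = 1 := hsum
      _ = 1^2 := by norm_num

end Stmt15
end
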